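/- arXiv:1102.5212 — 2 statements merged into one kernel-verified Lean document; each statement's English description precedes it below -/
import Mathlib

section
/- Let β₀ ∈ L²(T₁×T₂). The following three statements are equivalent: (a) the random element ε := Y − L_Xβ₀ of L²(T₂) satisfies E[⟨v,ε⟩] = 0 and E[⟨u,X⟩⟨v,ε⟩] = 0 for all u ∈ L²(T₁), v ∈ L²(T₂) (i.e., the pair (X,Y) satisfies the functional linear model with parameter function β₀); (b) Γ_XX β₀ = r_XY (β₀ solves the functional population normal equation); (c) E‖Y − L_Xβ₀‖² ≤ E‖Y − L_Xβ‖² for every β ∈ L²(T₁×T₂). -/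
open MeasureTheory Filter
open scoped RealInnerProductSpace ENNReal NNReal Topology

noncomputable section

namespace FLR

/-- Lebesgue measure on the compact interval `[a, b] ⊆ ℝ`. -/
abbrev leb (a b : ℝ) : Measure ℝ := volume.restrict (Set.Icc a b)

variable {α β Ω : Type*} [MeasurableSpace α] [MeasurableSpace β] [MeasurableSpace Ω]

/-- The elementary tensor `u ⊗ v`, i.e. `(u ⊗ v)(s,t) = u s * v t`, as an element of
`L²(μ × ν)`. -/
def tensor {μ : Measure α} {ν : Measure β} [SigmaFinite μ] [SigmaFinite ν]
    (u : Lp ℝ 2 μ) (v : Lp ℝ 2 ν) : Lp ℝ 2 (μ.prod ν) :=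
  MemLp.toLp (fun p : α × β => u p.1 * v p.2) (by
    have hm : AEStronglyMeasurable (fun p : α × β => u p.1 * v p.2) (μ.prod ν) :=
      (Lp.aestronglyMeasurable u).comp_fst.mul (Lp.aestronglyMeasurable v).comp_snd
    rw [memLp_two_iff_integrable_sq hm]
    have h : (fun p : α × β => (u p.1 * v p.2) ^ 2)
        = fun p : α × β => ((u : α → ℝ) p.1) ^ 2 * ((v : β → ℝ) p.2) ^ 2 := by
      funext p; ring
    rw [h]
    exact (Lp.memLp u).integrable_sq.mul_prod (Lp.memLp v).integrable_sq)

/-- Cross-covariance operator `R_{ZW} u = E[⟨u, W⟩ Z]` of a pair of random elements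
(a Bochner integral). -/
def covOp {μ : Measure α} {ν : Measure β} (P : Measure Ω)
    (Z : Ω → Lp ℝ 2 μ) (W : Ω → Lp ℝ 2 ν) (u : Lp ℝ 2 ν) : Lp ℝ 2 μ :=
  ∫ ω, ⟪u, W ω⟫ • Z ω ∂P

/-- The integral operator `(T_b u)(t) = ∫ b(s,t) u(s) ds` with kernel `b ∈ L²(μ × ν)`;
it maps `L²(μ)` into `L²(ν)`. -/
def intOp {μ : Measure α} {ν : Measure β} [SigmaFinite μ] [SigmaFinite ν]
    (b : Lp ℝ 2 (μ.prod ν)) (u : Lp ℝ 2 μ) : Lp ℝ 2 ν := by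
  classical
  exact if h : MemLp (fun t : β => ∫ s, b (s, t) * u s ∂μ) 2 ν then h.toLp _ else 0

set_option linter.unusedSectionVars false

section TensorBasics

variable {μ : Measure α} {ν : Measure β} [IsFiniteMeasure μ] [IsFiniteMeasure ν]

lemma L2.integrable_mul (f g : Lp ℝ 2 μ) : Integrable (fun x => f x * g x) μ := by
  simpa using MeasureTheory.L2.integrable_inner (𝕜 := ℝ) g f

lemma L2.inner_eq (f g : Lp ℝ 2 μ) : ⟪f, g⟫ = ∫ x, f x * g x ∂μ := by
  rw [MeasureTheory.L2.inner_def]; simp [RCLike.inner_apply, mul_comm]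

lemma tensor_coeFn (u : Lp ℝ 2 μ) (v : Lp ℝ 2 ν) :
    ⇑(tensor u v) =ᵐ[μ.prod ν] fun p => u p.1 * v p.2 :=
  MemLp.coeFn_toLp _

lemma ae_fst {f g : α → ℝ} (h : f =ᵐ[μ] g) :
    (fun p : α × β => f p.1) =ᵐ[μ.prod ν] fun p => g p.1 :=
  Measure.quasiMeasurePreserving_fst.ae_eq_comp h

lemma ae_snd {f g : β → ℝ} (h : f =ᵐ[ν] g) :
    (fun p : α × β => f p.2) =ᵐ[μ.prod ν] fun p => g p.2 :=
  Measure.quasiMeasurePreserving_snd.ae_eq_comp h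

lemma inner_tensor_tensor (u u' : Lp ℝ 2 μ) (v v' : Lp ℝ 2 ν) :
    ⟪tensor u v, tensor u' v'⟫ = ⟪u, u'⟫ * ⟪v, v'⟫ := by
  rw [L2.inner_eq, L2.inner_eq, L2.inner_eq]
  have h1 : (fun p : α × β => (tensor u v) p * (tensor u' v') p)
      =ᵐ[μ.prod ν] fun p => (u p.1 * u' p.1) * (v p.2 * v' p.2) := by
    filter_upwards [tensor_coeFn u v, tensor_coeFn u' v'] with p h1 h2
    rw [h1, h2]; ring
  rw [integral_congr_ae h1]
  rw [← integral_prod_mul (μ := μ) (ν := ν) (fun x => u x * u' x) (fun y => v y * v' y)]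

lemma norm_tensor (u : Lp ℝ 2 μ) (v : Lp ℝ 2 ν) : ‖tensor u v‖ = ‖u‖ * ‖v‖ := by
  have h := inner_tensor_tensor u u v v
  rw [real_inner_self_eq_norm_sq, real_inner_self_eq_norm_sq, real_inner_self_eq_norm_sq] at h
  have h2 : (‖tensor u v‖) ^ 2 = (‖u‖ * ‖v‖) ^ 2 := by rw [h]; ring
  nlinarith [norm_nonneg (tensor u v), norm_nonneg u, norm_nonneg v, mul_nonneg (norm_nonneg u) (norm_nonneg v)]

end TensorBasics
section TensorLinear

variable {μ : Measure α} {ν : Measure β} [IsFiniteMeasure μ] [IsFiniteMeasure ν]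

lemma tensor_add_left (u u' : Lp ℝ 2 μ) (v : Lp ℝ 2 ν) :
    tensor (u + u') v = tensor u v + tensor u' v := by
  apply Lp.ext
  filter_upwards [tensor_coeFn (u + u') v, tensor_coeFn u v, tensor_coeFn u' v,
    Lp.coeFn_add (tensor u v) (tensor u' v),
    ae_fst (μ := μ) (ν := ν) (Lp.coeFn_add u u')] with p h1 h2 h3 h4 h5
  simp only [h1, h4, Pi.add_apply, h2, h3, h5]
  ring

lemma tensor_smul_left (c : ℝ) (u : Lp ℝ 2 μ) (v : Lp ℝ 2 ν) :
    tensor (c • u) v = c • tensor u v := by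
  apply Lp.ext
  filter_upwards [tensor_coeFn (c • u) v, tensor_coeFn u v,
    Lp.coeFn_smul c (tensor u v),
    ae_fst (μ := μ) (ν := ν) (Lp.coeFn_smul c u)] with p h1 h2 h3 h4
  simp only [h1, h3, Pi.smul_apply, h2, h4, smul_eq_mul]
  ring

lemma tensor_add_right (u : Lp ℝ 2 μ) (v v' : Lp ℝ 2 ν) :
    tensor u (v + v') = tensor u v + tensor u v' := by
  apply Lp.ext
  filter_upwards [tensor_coeFn u (v + v'), tensor_coeFn u v, tensor_coeFn u v',
    Lp.coeFn_add (tensor u v) (tensor u v'),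
    ae_snd (μ := μ) (ν := ν) (Lp.coeFn_add v v')] with p h1 h2 h3 h4 h5
  simp only [h1, h4, Pi.add_apply, h2, h3, h5]
  ring

lemma tensor_smul_right (c : ℝ) (u : Lp ℝ 2 μ) (v : Lp ℝ 2 ν) :
    tensor u (c • v) = c • tensor u v := by
  apply Lp.ext
  filter_upwards [tensor_coeFn u (c • v), tensor_coeFn u v,
    Lp.coeFn_smul c (tensor u v),
    ae_snd (μ := μ) (ν := ν) (Lp.coeFn_smul c v)] with p h1 h2 h3 h4
  simp only [h1, h3, Pi.smul_apply, h2, h4, smul_eq_mul]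
  ring

variable (μ ν) in
/-- The tensor map as a continuous bilinear map. -/
def tensorCLM : Lp ℝ 2 μ →L[ℝ] Lp ℝ 2 ν →L[ℝ] Lp ℝ 2 (μ.prod ν) :=
  LinearMap.mkContinuous₂
    (LinearMap.mk₂ ℝ tensor tensor_add_left tensor_smul_left tensor_add_right tensor_smul_right)
    1 (fun u v => by simp [norm_tensor])

@[simp] lemma tensorCLM_apply (u : Lp ℝ 2 μ) (v : Lp ℝ 2 ν) :
    tensorCLM μ ν u v = tensor u v := rfl

end TensorLinear
section Density

variable {μ : Measure α} {ν : Measure β} [IsFiniteMeasure μ] [IsFiniteMeasure ν]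

lemma indLp_congr {γ : Type*} [MeasurableSpace γ] {π : Measure γ} {s t : Set γ} (h : s = t)
    (hs : MeasurableSet s) (ht : MeasurableSet t) (hμs : π s ≠ ∞) (hμt : π t ≠ ∞) (c : ℝ) :
    indicatorConstLp 2 hs hμs c = indicatorConstLp 2 ht hμt c := by subst h; rfl

lemma indLp_smul {γ : Type*} [MeasurableSpace γ] {π : Measure γ} {s : Set γ}
    (hs : MeasurableSet s) (hμs : π s ≠ ∞) (c : ℝ) :
    indicatorConstLp 2 hs hμs c = c • indicatorConstLp 2 hs hμs (1 : ℝ) := by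
  apply Lp.ext
  filter_upwards [indicatorConstLp_coeFn (p := 2) (hs := hs) (hμs := hμs) (c := c),
    Lp.coeFn_smul c (indicatorConstLp 2 hs hμs (1 : ℝ)),
    indicatorConstLp_coeFn (p := 2) (hs := hs) (hμs := hμs) (c := (1:ℝ))] with x h1 h2 h3
  rw [h1, h2, Pi.smul_apply, h3, smul_eq_mul]
  by_cases hx : x ∈ s <;> simp [hx]

variable (μ ν) in
/-- The span of elementary tensors. -/
def tensorSpan : Submodule ℝ (Lp ℝ 2 (μ.prod ν)) :=
  Submodule.span ℝ {w | ∃ u v, tensor u v = w}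

lemma indicator_mem_closure_tensorSpan {s : Set (α × β)} (hs : MeasurableSet s)
    (hμs : (μ.prod ν) s ≠ ∞) (c : ℝ) :
    indicatorConstLp 2 hs hμs c ∈ (tensorSpan μ ν).topologicalClosure := by
  set S := (tensorSpan μ ν).topologicalClosure with hS
  -- reduce to c = 1
  suffices h1 : ∀ {t : Set (α × β)} (ht : MeasurableSet t) (hμt : (μ.prod ν) t ≠ ∞),
      indicatorConstLp 2 ht hμt (1 : ℝ) ∈ S by
    rw [indLp_smul]
    exact Submodule.smul_mem _ _ (h1 hs hμs)
  intro t ht hμt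
  -- the union-of-two-sets step
  have key : ∀ {s₁ s₂ : Set (α × β)} (h₁ : MeasurableSet s₁) (h₂ : MeasurableSet s₂),
      Disjoint s₁ s₂ →
      indicatorConstLp 2 h₁ (measure_ne_top _ _) (1:ℝ) ∈ S →
      indicatorConstLp 2 h₂ (measure_ne_top _ _) (1:ℝ) ∈ S →
      indicatorConstLp 2 (h₁.union h₂) (measure_ne_top _ _) (1:ℝ) ∈ S := by
    intro s₁ s₂ h₁ h₂ hdisj hm₁ hm₂
    have heq := indicatorConstLp_disjoint_union (p := 2) h₁ h₂
      (measure_ne_top (μ.prod ν) _) (measure_ne_top (μ.prod ν) _) hdisj (1:ℝ)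
    rw [indLp_congr rfl (h₁.union h₂) (h₁.union h₂) (measure_ne_top (μ.prod ν) _)
      (measure_ne_top (μ.prod ν) _) (1:ℝ), heq]
    exact Submodule.add_mem _ hm₁ hm₂
  -- set induction
  have main : ∀ ⦃t : Set (α × β)⦄, MeasurableSet t →
      ∀ (ht : MeasurableSet t), indicatorConstLp 2 ht (measure_ne_top _ _) (1:ℝ) ∈ S := by
    refine MeasurableSpace.induction_on_inter generateFrom_prod.symm isPiSystem_prod ?_ ?_ ?_ ?_
    · intro ht
      rw [indLp_congr rfl ht MeasurableSet.empty (measure_ne_top (μ.prod ν) _)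
        (measure_ne_top (μ.prod ν) _)]
      simp only [indicatorConstLp_empty]
      exact Submodule.zero_mem _
    · rintro t ⟨A, hA, B, hB, rfl⟩ ht
      have hAB : indicatorConstLp 2 (hA.prod hB) (measure_ne_top (μ.prod ν) _) (1:ℝ) =
          tensor (indicatorConstLp 2 hA (measure_ne_top μ _) (1:ℝ))
                 (indicatorConstLp 2 hB (measure_ne_top ν _) (1:ℝ)) := by
        apply Lp.ext
        filter_upwards [indicatorConstLp_coeFn (p := 2) (hs := hA.prod hB)
            (hμs := measure_ne_top (μ.prod ν) _) (c := (1:ℝ)),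
          tensor_coeFn (indicatorConstLp 2 hA (measure_ne_top μ _) (1:ℝ))
            (indicatorConstLp 2 hB (measure_ne_top ν _) (1:ℝ)),
          ae_fst (μ := μ) (ν := ν) (indicatorConstLp_coeFn (p := 2) (hs := hA)
            (hμs := measure_ne_top μ _) (c := (1:ℝ))),
          ae_snd (μ := μ) (ν := ν) (indicatorConstLp_coeFn (p := 2) (hs := hB)
            (hμs := measure_ne_top ν _) (c := (1:ℝ)))] with p h1 h2 h3 h4
        rw [h1, h2, h3, h4]
        by_cases hpA : p.1 ∈ A <;> by_cases hpB : p.2 ∈ B <;>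
          simp [Set.indicator, hpA, hpB, Set.mem_prod]
      rw [indLp_congr rfl ht (hA.prod hB) (measure_ne_top _ _) (measure_ne_top _ _), hAB]
      exact Submodule.le_topologicalClosure _ (Submodule.subset_span ⟨_, _, rfl⟩)
    · intro t htm hCt htc'
      have huniv : indicatorConstLp 2 MeasurableSet.univ
          (measure_ne_top (μ.prod ν) _) (1:ℝ) ∈ S := by
        have hu : (Set.univ : Set (α × β)) = Set.univ ×ˢ Set.univ := by
          rw [Set.univ_prod_univ]
        -- membership of univ indicator: it's a tensor
        have hAB : indicatorConstLp 2 MeasurableSet.univ (measure_ne_top (μ.prod ν) _) (1:ℝ) =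
            tensor (indicatorConstLp 2 MeasurableSet.univ (measure_ne_top μ _) (1:ℝ))
                   (indicatorConstLp 2 MeasurableSet.univ (measure_ne_top ν _) (1:ℝ)) := by
          apply Lp.ext
          filter_upwards [indicatorConstLp_coeFn (p := 2) (hs := (MeasurableSet.univ : MeasurableSet (Set.univ : Set (α × β))))
              (hμs := measure_ne_top _ _) (c := (1:ℝ)),
            tensor_coeFn (indicatorConstLp 2 MeasurableSet.univ (measure_ne_top μ _) (1:ℝ))
              (indicatorConstLp 2 MeasurableSet.univ (measure_ne_top ν _) (1:ℝ)),
            ae_fst (μ := μ) (ν := ν) (indicatorConstLp_coeFn (p := 2) (hs := (MeasurableSet.univ : MeasurableSet (Set.univ : Set α)))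
              (hμs := measure_ne_top _ _) (c := (1:ℝ))),
            ae_snd (μ := μ) (ν := ν) (indicatorConstLp_coeFn (p := 2) (hs := (MeasurableSet.univ : MeasurableSet (Set.univ : Set β)))
              (hμs := measure_ne_top _ _) (c := (1:ℝ)))] with p h1 h2 h3 h4
          rw [h1, h2, h3, h4]
          simp
        rw [hAB]
        exact Submodule.le_topologicalClosure _ (Submodule.subset_span ⟨_, _, rfl⟩)
      -- 1_{tᶜ} = 1_univ - 1_t
      have hsub : indicatorConstLp 2 htm.compl (measure_ne_top _ _) (1:ℝ) =
          indicatorConstLp 2 MeasurableSet.univ (measure_ne_top (μ.prod ν) _) (1:ℝ) -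
          indicatorConstLp 2 htm (measure_ne_top _ _) (1:ℝ) := by
        apply Lp.ext
        filter_upwards [indicatorConstLp_coeFn (p := 2) (hs := htm.compl)
            (hμs := measure_ne_top _ _) (c := (1:ℝ)),
          Lp.coeFn_sub (indicatorConstLp 2 MeasurableSet.univ (measure_ne_top (μ.prod ν) _) (1:ℝ))
            (indicatorConstLp 2 htm (measure_ne_top _ _) (1:ℝ)),
          indicatorConstLp_coeFn (p := 2) (hs := (MeasurableSet.univ : MeasurableSet (Set.univ : Set (α × β))))
            (hμs := measure_ne_top _ _) (c := (1:ℝ)),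
          indicatorConstLp_coeFn (p := 2) (hs := htm) (hμs := measure_ne_top _ _) (c := (1:ℝ))]
          with p h1 h2 h3 h4
        rw [h1, h2, Pi.sub_apply, h3, h4]
        by_cases hp : p ∈ t <;> simp [hp]
      rw [indLp_congr rfl htc' htm.compl (measure_ne_top _ _) (measure_ne_top _ _), hsub]
      exact Submodule.sub_mem _ huniv (hCt htm)
    · intro f hdisj hfm hmem hU
      -- accumulated sets
      set A : ℕ → Set (α × β) := Set.accumulate f with hA
      have hAm : ∀ n, MeasurableSet (A n) := fun n =>
        MeasurableSet.biUnion (Set.to_countable _) fun i _ => hfm i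
      have hAmem : ∀ n, indicatorConstLp 2 (hAm n) (measure_ne_top (μ.prod ν) _) (1:ℝ) ∈ S := by
        intro n
        induction n with
        | zero =>
          have h0 : A 0 = f 0 := by
            ext z; simp [hA, Set.mem_accumulate, Nat.le_zero]
          rw [indLp_congr h0 (hAm 0) (hfm 0) (measure_ne_top (μ.prod ν) _) (measure_ne_top (μ.prod ν) _)]
          exact hmem 0 (hfm 0)
        | succ n ih =>
          have hsucc : A (n + 1) = A n ∪ f (n + 1) := by
            ext z
            simp only [hA, Set.mem_accumulate, Set.mem_union]
            constructor
            · rintro ⟨y, hy, hz⟩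
              rcases Nat.le_succ_iff.mp hy with h | h
              · exact Or.inl ⟨y, h, hz⟩
              · subst h; exact Or.inr hz
            · rintro (⟨y, hy, hz⟩ | hz)
              · exact ⟨y, hy.trans (Nat.le_succ n), hz⟩
              · exact ⟨n + 1, le_rfl, hz⟩
          have hdisj' : Disjoint (A n) (f (n + 1)) := by
            rw [Set.disjoint_left]
            rintro z hz hz'
            rcases Set.mem_accumulate.mp hz with ⟨y, hy, hzy⟩
            exact Set.disjoint_left.mp (hdisj (by omega : y ≠ n + 1)) hzy hz'
          rw [indLp_congr hsucc (hAm (n+1)) ((hAm n).union (hfm (n+1)))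
            (measure_ne_top (μ.prod ν) _) (measure_ne_top (μ.prod ν) _)]
          exact key (hAm n) (hfm (n+1)) hdisj' ih (hmem (n+1) (hfm (n+1)))
      -- limit
      have hUA : (⋃ i, f i) = ⋃ n, A n := (Set.iUnion_accumulate).symm
      have hdiff : ∀ n, indicatorConstLp 2 hU (measure_ne_top (μ.prod ν) _) (1:ℝ) -
          indicatorConstLp 2 (hAm n) (measure_ne_top (μ.prod ν) _) (1:ℝ) =
          indicatorConstLp 2 (hU.diff (hAm n)) (measure_ne_top (μ.prod ν) _) (1:ℝ) := by
        intro n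
        have hsplit : (⋃ i, f i) = A n ∪ ((⋃ i, f i) \ A n) := by
          rw [Set.union_diff_cancel]
          exact (Set.accumulate_subset_iUnion n)
        have : indicatorConstLp 2 hU (measure_ne_top (μ.prod ν) _) (1:ℝ) =
            indicatorConstLp 2 (hAm n) (measure_ne_top (μ.prod ν) _) (1:ℝ) +
            indicatorConstLp 2 (hU.diff (hAm n)) (measure_ne_top (μ.prod ν) _) (1:ℝ) := by
          rw [indLp_congr hsplit hU ((hAm n).union (hU.diff (hAm n)))
            (measure_ne_top (μ.prod ν) _) (measure_ne_top (μ.prod ν) _),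
            indicatorConstLp_disjoint_union _ _ _ _ Set.disjoint_sdiff_right]
        rw [this]; abel
      have hmeas0 : Tendsto (fun n => (μ.prod ν) ((⋃ i, f i) \ A n)) atTop (𝓝 0) := by
        have h1 : Tendsto (fun n => (μ.prod ν) ((⋃ i, f i) \ A n)) atTop
            (𝓝 ((μ.prod ν) (⋂ n, (⋃ i, f i) \ A n))) := by
          apply tendsto_measure_iInter_atTop
          · exact fun n => (hU.diff (hAm n)).nullMeasurableSet
          · intro m n hmn
            exact Set.diff_subset_diff_right (Set.monotone_accumulate hmn)
          · exact ⟨0, measure_ne_top _ _⟩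
        have h2 : (⋂ n, (⋃ i, f i) \ A n) = ∅ := by
          rw [← Set.diff_iUnion, ← hUA, Set.diff_self]
        rwa [h2, measure_empty] at h1
      have hnorm : Tendsto (fun n => ‖indicatorConstLp 2 hU (measure_ne_top (μ.prod ν) _) (1:ℝ) -
          indicatorConstLp 2 (hAm n) (measure_ne_top (μ.prod ν) _) (1:ℝ)‖) atTop (𝓝 0) := by
        have heq : ∀ n, ‖indicatorConstLp 2 hU (measure_ne_top (μ.prod ν) _) (1:ℝ) -
            indicatorConstLp 2 (hAm n) (measure_ne_top (μ.prod ν) _) (1:ℝ)‖ =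
            ((μ.prod ν) ((⋃ i, f i) \ A n)).toReal ^ (1 / (2:ℝ)) := by
          intro n
          rw [hdiff n, norm_indicatorConstLp (by norm_num) (by norm_num)]
          simp [measureReal_def]
        simp_rw [heq]
        have htoReal : Tendsto (fun n => ((μ.prod ν) ((⋃ i, f i) \ A n)).toReal) atTop (𝓝 0) := by
          have := (ENNReal.tendsto_toReal (by simp : (0:ℝ≥0∞) ≠ ∞)).comp hmeas0
          simpa [Function.comp_def] using this
        have hcont : ContinuousAt (fun x : ℝ => x ^ (1 / (2:ℝ))) 0 :=
          Real.continuousAt_rpow_const 0 _ (Or.inr (by norm_num))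
        have := hcont.tendsto.comp htoReal
        simpa [Function.comp_def, Real.zero_rpow (by norm_num : (1:ℝ)/2 ≠ 0)] using this
      have htend : Tendsto (fun n => indicatorConstLp 2 (hAm n) (measure_ne_top (μ.prod ν) _) (1:ℝ))
          atTop (𝓝 (indicatorConstLp 2 hU (measure_ne_top (μ.prod ν) _) (1:ℝ))) := by
        rw [tendsto_iff_norm_sub_tendsto_zero]
        exact hnorm.congr fun n => norm_sub_rev _ _
      exact (Submodule.isClosed_topologicalClosure _).mem_of_tendsto htend
        (Filter.Eventually.of_forall fun n => hAmem n)
  exact main ht ht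

lemma tensorSpan_dense_top : (tensorSpan μ ν).topologicalClosure = ⊤ := by
  rw [Submodule.eq_top_iff']
  intro f
  refine Lp.induction (by norm_num : (2:ℝ≥0∞) ≠ ∞)
    (motive := fun f : Lp ℝ 2 (μ.prod ν) => f ∈ (tensorSpan μ ν).topologicalClosure) ?_ ?_ ?_ f
  · intro c s hs hμs
    rw [Lp.simpleFunc.coe_indicatorConst]
    exact indicator_mem_closure_tensorSpan hs hμs.ne c
  · intro f g hf hg _ hPf hPg
    exact Submodule.add_mem _ hPf hPg
  · exact IsClosed.preimage continuous_id (Submodule.isClosed_topologicalClosure _)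

lemma eq_zero_of_inner_tensor {w : Lp ℝ 2 (μ.prod ν)}
    (h : ∀ (u : Lp ℝ 2 μ) (v : Lp ℝ 2 ν), ⟪tensor u v, w⟫ = 0) : w = 0 := by
  have hker : tensorSpan μ ν ≤ LinearMap.ker (innerSL ℝ w).toLinearMap := by
    rw [tensorSpan, Submodule.span_le]
    rintro x ⟨u, v, rfl⟩
    simp only [SetLike.mem_coe, LinearMap.mem_ker, ContinuousLinearMap.coe_coe, innerSL_apply_apply]
    rw [real_inner_comm]; exact h u v
  have hclosed : IsClosed ((LinearMap.ker (innerSL ℝ w).toLinearMap : Submodule ℝ (Lp ℝ 2 (μ.prod ν))) : Set (Lp ℝ 2 (μ.prod ν))) := by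
    exact ContinuousLinearMap.isClosed_ker _
  have := Submodule.topologicalClosure_minimal _ hker hclosed
  rw [tensorSpan_dense_top] at this
  have hw : w ∈ LinearMap.ker (innerSL ℝ w).toLinearMap := this Submodule.mem_top
  rw [LinearMap.mem_ker] at hw
  have : ⟪w, w⟫ = 0 := hw
  exact inner_self_eq_zero.mp this

lemma tensor_ext_inner {w w' : Lp ℝ 2 (μ.prod ν)}
    (h : ∀ (u : Lp ℝ 2 μ) (v : Lp ℝ 2 ν), ⟪tensor u v, w⟫ = ⟪tensor u v, w'⟫) : w = w' := by
  have : w - w' = 0 := by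
    apply eq_zero_of_inner_tensor
    intro u v
    rw [inner_sub_right, h u v, sub_self]
  exact sub_eq_zero.mp this

lemma dense_tensorSpan_set : Dense ((tensorSpan μ ν : Submodule ℝ (Lp ℝ 2 (μ.prod ν))) : Set (Lp ℝ 2 (μ.prod ν))) :=
  Submodule.dense_iff_topologicalClosure_eq_top.mpr tensorSpan_dense_top

end Density
section IntOp

variable {μ : Measure α} {ν : Measure β} [IsFiniteMeasure μ] [IsFiniteMeasure ν]

lemma memℒp_intOp (b : Lp ℝ 2 (μ.prod ν)) (u : Lp ℝ 2 μ) :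
    MemLp (fun t : β => ∫ s, b (s, t) * u s ∂μ) 2 ν := by
  set F : β → ℝ := fun t => ∫ s, b (s, t) * u s ∂μ with hF
  have hbm : AEStronglyMeasurable (⇑b) (μ.prod ν) := Lp.aestronglyMeasurable b
  have hswap : AEStronglyMeasurable (fun q : β × α => b (q.2, q.1)) (ν.prod μ) := by
    exact hbm.prod_swap
  have hgm : AEStronglyMeasurable (fun q : β × α => b (q.2, q.1) * u q.2) (ν.prod μ) :=
    hswap.mul (Lp.aestronglyMeasurable u).comp_snd
  have hFm : AEStronglyMeasurable F ν := by
    have := hgm.integral_prod_right'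
    exact this
  have hb2 : Integrable (fun p : α × β => (b p) ^ 2) (μ.prod ν) :=
    (memLp_two_iff_integrable_sq hbm).mp (Lp.memLp b)
  have hb2s : Integrable (fun q : β × α => (b (q.2, q.1)) ^ 2) (ν.prod μ) := by
    have := hb2.swap
    exact this
  have hu2 : Integrable (fun s => (u s) ^ 2) μ :=
    (memLp_two_iff_integrable_sq (Lp.aestronglyMeasurable u)).mp (Lp.memLp u)
  have hG : Integrable (fun t => (∫ s, (b (s, t)) ^ 2 ∂μ) * (∫ s, (u s) ^ 2 ∂μ)) ν := by
    have h1 : Integrable (fun t => ∫ s, (b (s, t)) ^ 2 ∂μ) ν := hb2s.integral_prod_left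
    exact h1.mul_const _
  have hsect_int : ∀ᵐ t ∂ν, Integrable (fun s => (b (s, t)) ^ 2) μ := hb2s.prod_right_ae
  have hsect_m : ∀ᵐ t ∂ν, AEStronglyMeasurable (fun s => b (s, t)) μ := hswap.prodMk_left
  have hbound : ∀ᵐ t ∂ν, ‖(F t) ^ 2‖ ≤ (∫ s, (b (s, t)) ^ 2 ∂μ) * (∫ s, (u s) ^ 2 ∂μ) := by
    filter_upwards [hsect_int, hsect_m] with t hint hm
    have hbt : MemLp (fun s => b (s, t)) 2 μ := (memLp_two_iff_integrable_sq hm).mpr hint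
    set bt : Lp ℝ 2 μ := hbt.toLp _ with hbt'
    have hcoe : ⇑bt =ᵐ[μ] fun s => b (s, t) := MemLp.coeFn_toLp _
    have h1 : F t = ⟪bt, u⟫ := by
      rw [L2.inner_eq]
      refine (integral_congr_ae ?_).symm
      filter_upwards [hcoe] with s hs
      rw [hs]
    have h2 : ‖bt‖ ^ 2 = ∫ s, (b (s, t)) ^ 2 ∂μ := by
      rw [← real_inner_self_eq_norm_sq, L2.inner_eq]
      refine integral_congr_ae ?_
      filter_upwards [hcoe] with s hs
      rw [hs]; ring
    have h3 : ‖u‖ ^ 2 = ∫ s, (u s) ^ 2 ∂μ := by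
      rw [← real_inner_self_eq_norm_sq, L2.inner_eq]
      refine integral_congr_ae ?_
      filter_upwards with s; ring
    have h4 : |⟪bt, u⟫| ≤ ‖bt‖ * ‖u‖ := abs_real_inner_le_norm bt u
    rw [← h2, ← h3, h1]
    have : ⟪bt, u⟫ ^ 2 ≤ (‖bt‖ * ‖u‖) ^ 2 := by
      rw [← sq_abs]
      exact pow_le_pow_left₀ (abs_nonneg _) h4 2
    calc ‖⟪bt, u⟫ ^ 2‖ = ⟪bt, u⟫ ^ 2 := by rw [Real.norm_eq_abs, abs_of_nonneg (sq_nonneg _)]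
    _ ≤ (‖bt‖ * ‖u‖) ^ 2 := this
    _ = ‖bt‖ ^ 2 * ‖u‖ ^ 2 := by ring
  have hF2m : AEStronglyMeasurable (fun t => (F t) ^ 2) ν :=
    (continuous_pow 2).comp_aestronglyMeasurable hFm
  rw [memLp_two_iff_integrable_sq hFm]
  exact Integrable.mono' hG hF2m hbound

lemma intOp_eq (b : Lp ℝ 2 (μ.prod ν)) (u : Lp ℝ 2 μ) :
    intOp b u = (memℒp_intOp b u).toLp _ := dif_pos _

lemma intOp_coeFn (b : Lp ℝ 2 (μ.prod ν)) (u : Lp ℝ 2 μ) :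
    ⇑(intOp b u) =ᵐ[ν] fun t => ∫ s, b (s, t) * u s ∂μ := by
  rw [intOp_eq]; exact MemLp.coeFn_toLp _

lemma inner_intOp (b : Lp ℝ 2 (μ.prod ν)) (u : Lp ℝ 2 μ) (v : Lp ℝ 2 ν) :
    ⟪v, intOp b u⟫ = ⟪b, tensor u v⟫ := by
  have hint : Integrable (fun p : α × β => b p * (u p.1 * v p.2)) (μ.prod ν) := by
    refine (L2.integrable_mul b (tensor u v)).congr ?_
    filter_upwards [tensor_coeFn u v] with p hp
    rw [hp]
  rw [L2.inner_eq, L2.inner_eq]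
  have hRHS : ∫ p, b p * (tensor u v) p ∂(μ.prod ν) = ∫ p : α × β, b p * (u p.1 * v p.2) ∂(μ.prod ν) := by
    refine integral_congr_ae ?_
    filter_upwards [tensor_coeFn u v] with p hp
    rw [hp]
  rw [hRHS, integral_prod _ hint]
  have hswap : ∫ s, ∫ t, b (s, t) * (u s * v t) ∂ν ∂μ = ∫ t, ∫ s, b (s, t) * (u s * v t) ∂μ ∂ν := by
    apply integral_integral_swap
    exact hint
  rw [hswap]
  have hLHS : ∫ t, v t * (intOp b u) t ∂ν = ∫ t, (∫ s, b (s, t) * u s ∂μ) * v t ∂ν := by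
    refine integral_congr_ae ?_
    filter_upwards [intOp_coeFn b u] with t ht
    rw [ht, mul_comm]
  rw [hLHS]
  refine integral_congr_ae (Filter.Eventually.of_forall fun t => ?_)
  beta_reduce
  rw [← integral_mul_const]
  exact integral_congr_ae (Filter.Eventually.of_forall fun s => by ring)

lemma inner_intOp' (b : Lp ℝ 2 (μ.prod ν)) (u : Lp ℝ 2 μ) (v : Lp ℝ 2 ν) :
    ⟪intOp b u, v⟫ = ⟪b, tensor u v⟫ := by
  rw [real_inner_comm]; exact inner_intOp b u v

lemma norm_intOp_le (b : Lp ℝ 2 (μ.prod ν)) (u : Lp ℝ 2 μ) :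
    ‖intOp b u‖ ≤ ‖b‖ * ‖u‖ := by
  set w := intOp b u with hw
  have h1 : ‖w‖ ^ 2 = ⟪b, tensor u w⟫ := by
    rw [← real_inner_self_eq_norm_sq, hw, inner_intOp']
  have h2 : ⟪b, tensor u w⟫ ≤ ‖b‖ * ‖tensor u w‖ := real_inner_le_norm _ _
  rw [norm_tensor] at h2
  by_cases hw0 : ‖w‖ = 0
  · rw [hw0]; positivity
  · have hpos : 0 < ‖w‖ := lt_of_le_of_ne (norm_nonneg _) (Ne.symm hw0)
    nlinarith

lemma intOp_add_right (b : Lp ℝ 2 (μ.prod ν)) (u u' : Lp ℝ 2 μ) :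
    intOp b (u + u') = intOp b u + intOp b u' := by
  apply ext_inner_right ℝ
  intro v
  simp only [inner_intOp', inner_add_left, tensor_add_left, inner_add_right]

lemma intOp_smul_right (b : Lp ℝ 2 (μ.prod ν)) (c : ℝ) (u : Lp ℝ 2 μ) :
    intOp b (c • u) = c • intOp b u := by
  apply ext_inner_right ℝ
  intro v
  simp only [inner_intOp', real_inner_smul_left, tensor_smul_left, real_inner_smul_right]

lemma intOp_add_kernel (b b' : Lp ℝ 2 (μ.prod ν)) (u : Lp ℝ 2 μ) :
    intOp (b + b') u = intOp b u + intOp b' u := by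
  apply ext_inner_right ℝ
  intro v
  simp only [inner_intOp', inner_add_left]

lemma intOp_sub_kernel (b b' : Lp ℝ 2 (μ.prod ν)) (u : Lp ℝ 2 μ) :
    intOp (b - b') u = intOp b u - intOp b' u := by
  apply ext_inner_right ℝ
  intro v
  simp only [inner_intOp', inner_sub_left]

lemma intOp_smul_kernel (c : ℝ) (b : Lp ℝ 2 (μ.prod ν)) (u : Lp ℝ 2 μ) :
    intOp (c • b) u = c • intOp b u := by
  apply ext_inner_right ℝ
  intro v
  simp only [inner_intOp', real_inner_smul_left]

/-- The integral operator as a continuous linear map. -/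
def intOpCLM (b : Lp ℝ 2 (μ.prod ν)) : Lp ℝ 2 μ →L[ℝ] Lp ℝ 2 ν :=
  LinearMap.mkContinuous
    { toFun := intOp b
      map_add' := intOp_add_right b
      map_smul' := intOp_smul_right b }
    ‖b‖ (fun u => norm_intOp_le b u)

@[simp] lemma intOpCLM_apply (b : Lp ℝ 2 (μ.prod ν)) (u : Lp ℝ 2 μ) :
    intOpCLM b u = intOp b u := rfl

end IntOp
section Omega

variable {P : Measure Ω} [IsProbabilityMeasure P]

lemma memℒp_mul_integrable {f g : Ω → ℝ} (hf : MemLp f 2 P) (hg : MemLp g 2 P) :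
    Integrable (fun ω => f ω * g ω) P := by
  refine (L2.integrable_mul (hf.toLp f) (hg.toLp g)).congr ?_
  filter_upwards [hf.coeFn_toLp, hg.coeFn_toLp] with ω h1 h2
  rw [h1, h2]

end Omega

set_option maxHeartbeats 2000000

/-- Proposition 2.2: for `β₀ ∈ L²(T₁×T₂)`, the following are equivalent:
(a) `(X,Y)` satisfies the functional linear model with parameter function `β₀`, i.e. the
error `ε = Y - L_X β₀` has mean zero and is uncorrelated with `X`;
(b) `β₀` solves the functional population normal equation `Γ_XX β₀ = r_XY`;
(c) `β₀` minimizes `E‖Y - L_X β‖²` over `β ∈ L²(T₁×T₂)`. -/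
theorem functional_linear_model_normal_equation_minimizer
    (a₁ b₁ a₂ b₂ : ℝ) {Ω : Type*} [MeasurableSpace Ω]
    (P : Measure Ω) [IsProbabilityMeasure P]
    (X : Ω → Lp ℝ 2 (leb a₁ b₁)) (Y : Ω → Lp ℝ 2 (leb a₂ b₂))
    (hXm : AEStronglyMeasurable X P) (hYm : AEStronglyMeasurable Y P)
    (hX2 : Integrable (fun ω => ‖X ω‖ ^ 2) P) (hY2 : Integrable (fun ω => ‖Y ω‖ ^ 2) P)
    (hX0 : ∀ u, ∫ ω, ⟪u, X ω⟫ ∂P = 0) (hY0 : ∀ v, ∫ ω, ⟪v, Y ω⟫ ∂P = 0)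
    (Γ : Lp ℝ 2 ((leb a₁ b₁).prod (leb a₂ b₂)) →L[ℝ] Lp ℝ 2 ((leb a₁ b₁).prod (leb a₂ b₂)))
    (hΓ : ∀ (u : Lp ℝ 2 (leb a₁ b₁)) (v : Lp ℝ 2 (leb a₂ b₂)), Γ (tensor u v) = tensor (covOp P X X u) v)
    (rXY : Lp ℝ 2 ((leb a₁ b₁).prod (leb a₂ b₂)))
    (hrXY : ∀ (u : Lp ℝ 2 (leb a₁ b₁)) (v : Lp ℝ 2 (leb a₂ b₂)), ⟪rXY, tensor u v⟫ = ⟪covOp P X Y v, u⟫)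
    (β₀ : Lp ℝ 2 ((leb a₁ b₁).prod (leb a₂ b₂))) :
    (((∀ v, ∫ ω, ⟪v, Y ω - intOp β₀ (X ω)⟫ ∂P = 0) ∧
        (∀ u v, ∫ ω, ⟪u, X ω⟫ * ⟪v, Y ω - intOp β₀ (X ω)⟫ ∂P = 0)) ↔
      Γ β₀ = rXY) ∧
    (Γ β₀ = rXY ↔
      (∀ b, ∫ ω, ‖Y ω - intOp β₀ (X ω)‖ ^ 2 ∂P ≤ ∫ ω, ‖Y ω - intOp b (X ω)‖ ^ 2 ∂P)) := by
  classical
  -- basic MemLp facts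
  have hXL2 : MemLp X 2 P := (memLp_two_iff_integrable_sq_norm hXm).mpr hX2
  have hYL2 : MemLp Y 2 P := (memLp_two_iff_integrable_sq_norm hYm).mpr hY2
  have hXint : Integrable X P := hXL2.integrable one_le_two
  set ε : Ω → Lp ℝ 2 (leb a₂ b₂) := fun ω => Y ω - intOp β₀ (X ω) with hεdef
  have hTm : ∀ b : Lp ℝ 2 ((leb a₁ b₁).prod (leb a₂ b₂)),
      AEStronglyMeasurable (fun ω => intOp b (X ω)) P := fun b =>
    (intOpCLM b).continuous.comp_aestronglyMeasurable hXm
  have hTL2 : ∀ b : Lp ℝ 2 ((leb a₁ b₁).prod (leb a₂ b₂)),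
      MemLp (fun ω => intOp b (X ω)) 2 P := fun b => (intOpCLM b).comp_memLp' hXL2
  have hεm : AEStronglyMeasurable ε P := hYm.sub (hTm β₀)
  have hεL2 : MemLp ε 2 P := hYL2.sub (hTL2 β₀)
  have hinX : ∀ u, MemLp (fun ω => ⟪u, X ω⟫) 2 P := fun u =>
    (innerSL ℝ u).comp_memLp' hXL2
  have hinY : ∀ v, MemLp (fun ω => ⟪v, Y ω⟫) 2 P := fun v =>
    (innerSL ℝ v).comp_memLp' hYL2
  have hinε : ∀ v, MemLp (fun ω => ⟪v, ε ω⟫) 2 P := fun v =>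
    (innerSL ℝ v).comp_memLp' hεL2
  -- E X = 0
  have hEX : (∫ ω, X ω ∂P) = 0 := by
    apply ext_inner_right ℝ
    intro u
    rw [inner_zero_left, real_inner_comm, ← integral_inner hXint u, hX0 u]
  -- covariance integrands are integrable
  have hiXX : ∀ u, Integrable (fun ω => ⟪u, X ω⟫ • X ω) P := by
    intro u
    refine Integrable.mono' (g := fun ω => ‖u‖ * (‖X ω‖ * ‖X ω‖))
      ((memℒp_mul_integrable hXL2.norm hXL2.norm).const_mul ‖u‖)
      ((hinX u).aestronglyMeasurable.smul hXm) ?_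
    refine Filter.Eventually.of_forall fun ω => ?_
    rw [norm_smul]
    have h1 : ‖⟪u, X ω⟫‖ ≤ ‖u‖ * ‖X ω‖ := norm_inner_le_norm u (X ω)
    have h2 : (0:ℝ) ≤ ‖X ω‖ := norm_nonneg _
    calc ‖⟪u, X ω⟫‖ * ‖X ω‖ ≤ (‖u‖ * ‖X ω‖) * ‖X ω‖ := by gcongr
    _ = ‖u‖ * (‖X ω‖ * ‖X ω‖) := by ring
  have hiXY : ∀ v, Integrable (fun ω => ⟪v, Y ω⟫ • X ω) P := by
    intro v
    refine Integrable.mono' (g := fun ω => ‖v‖ * (‖Y ω‖ * ‖X ω‖))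
      ((memℒp_mul_integrable hYL2.norm hXL2.norm).const_mul ‖v‖)
      ((hinY v).aestronglyMeasurable.smul hXm) ?_
    refine Filter.Eventually.of_forall fun ω => ?_
    rw [norm_smul]
    have h1 : ‖⟪v, Y ω⟫‖ ≤ ‖v‖ * ‖Y ω‖ := norm_inner_le_norm v (Y ω)
    have h2 : (0:ℝ) ≤ ‖X ω‖ := norm_nonneg _
    calc ‖⟪v, Y ω⟫‖ * ‖X ω‖ ≤ (‖v‖ * ‖Y ω‖) * ‖X ω‖ := by gcongr
    _ = ‖v‖ * (‖Y ω‖ * ‖X ω‖) := by ring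
  -- inner products with covariance operators
  have hcovXX : ∀ u u', ⟪covOp P X X u, u'⟫ = ∫ ω, ⟪u, X ω⟫ * ⟪u', X ω⟫ ∂P := by
    intro u u'
    rw [real_inner_comm, covOp, ← integral_inner (hiXX u) u']
    refine integral_congr_ae (Filter.Eventually.of_forall fun ω => ?_)
    beta_reduce
    rw [real_inner_smul_right]
  have hcovXY : ∀ v u, ⟪covOp P X Y v, u⟫ = ∫ ω, ⟪u, X ω⟫ * ⟪v, Y ω⟫ ∂P := by
    intro v u
    rw [real_inner_comm, covOp, ← integral_inner (hiXY v) u]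
    refine integral_congr_ae (Filter.Eventually.of_forall fun ω => ?_)
    beta_reduce
    rw [real_inner_smul_right]
    ring
  -- Γ is self-adjoint
  have hΓsa : ContinuousLinearMap.adjoint Γ = Γ := by
    apply ContinuousLinearMap.coeFn_injective
    refine Continuous.ext_on dense_tensorSpan_set
      (ContinuousLinearMap.adjoint Γ).continuous Γ.continuous ?_
    intro x hx
    rw [SetLike.mem_coe] at hx
    induction hx using Submodule.span_induction with
    | mem x hx =>
      obtain ⟨u, v, rfl⟩ := hx
      apply tensor_ext_inner
      intro u' v'
      rw [ContinuousLinearMap.adjoint_inner_right, hΓ u v, hΓ u' v',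
        inner_tensor_tensor, inner_tensor_tensor]
      have h1 : ⟪covOp P X X u', u⟫ = ⟪u', covOp P X X u⟫ := by
        rw [hcovXX u' u]
        conv_rhs => rw [real_inner_comm]
        rw [hcovXX u u']
        refine integral_congr_ae (Filter.Eventually.of_forall fun ω => ?_)
        beta_reduce
        ring
      rw [h1]
    | zero => simp
    | add x y hx hy ihx ihy => simp [ihx, ihy]
    | smul a x hx ihx => simp [ihx]
  have hΓswap : ∀ u v, ⟪Γ β₀, tensor u v⟫ = ⟪β₀, Γ (tensor u v)⟫ := by
    intro u v
    conv_lhs => rw [← hΓsa]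
    rw [ContinuousLinearMap.adjoint_inner_left]
  -- the element M = E[X ⊗ ε]
  have hTenm : AEStronglyMeasurable (fun ω => tensor (X ω) (ε ω)) P := by
    have hcont : Continuous (fun p : Lp ℝ 2 (leb a₁ b₁) × Lp ℝ 2 (leb a₂ b₂) =>
        tensor p.1 p.2) := (tensorCLM (leb a₁ b₁) (leb a₂ b₂)).isBoundedBilinearMap.continuous
    exact hcont.comp_aestronglyMeasurable (hXm.prodMk hεm)
  have hTenint : Integrable (fun ω => tensor (X ω) (ε ω)) P := by
    refine Integrable.mono' (memℒp_mul_integrable hXL2.norm hεL2.norm) hTenm ?_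
    exact Filter.Eventually.of_forall fun ω => by rw [norm_tensor]
  set M : Lp ℝ 2 ((leb a₁ b₁).prod (leb a₂ b₂)) := ∫ ω, tensor (X ω) (ε ω) ∂P with hMdef
  have hMinner : ∀ w, ⟪w, M⟫ = ∫ ω, ⟪w, tensor (X ω) (ε ω)⟫ ∂P := fun w =>
    (integral_inner hTenint w).symm
  have hMten : ∀ u v, ⟪tensor u v, M⟫ = ∫ ω, ⟪u, X ω⟫ * ⟪v, ε ω⟫ ∂P := by
    intro u v
    rw [hMinner]
    refine integral_congr_ae (Filter.Eventually.of_forall fun ω => ?_)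
    beta_reduce
    rw [inner_tensor_tensor]
  -- the error has mean zero, always
  have hEε : ∀ v, ∫ ω, ⟪v, ε ω⟫ ∂P = 0 := by
    intro v
    have hεint : Integrable ε P := hεL2.integrable one_le_two
    rw [integral_inner hεint v]
    have hEεv : (∫ ω, ε ω ∂P) = 0 := by
      have hTint : Integrable (fun ω => intOp β₀ (X ω)) P := (hTL2 β₀).integrable one_le_two
      have h1 : (∫ ω, ε ω ∂P) = (∫ ω, Y ω ∂P) - ∫ ω, intOp β₀ (X ω) ∂P :=
        integral_sub (hYL2.integrable one_le_two) hTint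
      have hEY : (∫ ω, Y ω ∂P) = 0 := by
        apply ext_inner_right ℝ
        intro v'
        rw [inner_zero_left, real_inner_comm, ← integral_inner (hYL2.integrable one_le_two) v',
          hY0 v']
      have hET : (∫ ω, intOp β₀ (X ω) ∂P) = 0 := by
        have h2 : (∫ ω, intOpCLM β₀ (X ω) ∂P) = intOpCLM β₀ (∫ ω, X ω ∂P) :=
          ContinuousLinearMap.integral_comp_comm (intOpCLM β₀) hXint
        rw [hEX, map_zero] at h2
        exact h2
      rw [h1, hEY, hET, sub_zero]
    rw [hEεv, inner_zero_right]
  -- inner products of ⟪v, intOp b (X ω)⟫ are in L²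
  have hinT : ∀ v b, MemLp (fun ω => ⟪v, intOp b (X ω)⟫) 2 P := fun v b =>
    (innerSL ℝ v).comp_memLp' (hTL2 b)
  -- M = rXY - Γ β₀
  have hMeq : M = rXY - Γ β₀ := by
    apply tensor_ext_inner
    intro u v
    rw [hMten u v, inner_sub_right]
    have h1 : ⟪tensor u v, rXY⟫ = ∫ ω, ⟪u, X ω⟫ * ⟪v, Y ω⟫ ∂P := by
      rw [real_inner_comm, hrXY u v, hcovXY v u]
    have h2 : ⟪tensor u v, Γ β₀⟫ = ∫ ω, ⟪u, X ω⟫ * ⟪v, intOp β₀ (X ω)⟫ ∂P := by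
      rw [real_inner_comm, hΓswap u v, hΓ u v]
      have hpull : tensor (covOp P X X u) v = ∫ ω, tensor (⟪u, X ω⟫ • X ω) v ∂P := by
        rw [covOp]
        exact (ContinuousLinearMap.integral_comp_comm
          ((tensorCLM (leb a₁ b₁) (leb a₂ b₂)).flip v) (hiXX u)).symm
      have hti : Integrable (fun ω => tensor (⟪u, X ω⟫ • X ω) v) P :=
        (((tensorCLM (leb a₁ b₁) (leb a₂ b₂)).flip v)).integrable_comp (hiXX u)
      rw [hpull, ← integral_inner hti β₀]
      refine integral_congr_ae (Filter.Eventually.of_forall fun ω => ?_)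
      beta_reduce
      rw [tensor_smul_left, real_inner_smul_right, ← inner_intOp]
    rw [h1, h2, ← integral_sub (memℒp_mul_integrable (hinX u) (hinY v))
      (memℒp_mul_integrable (hinX u) (hinT v β₀))]
    refine integral_congr_ae (Filter.Eventually.of_forall fun ω => ?_)
    beta_reduce
    have : ⟪v, ε ω⟫ = ⟪v, Y ω⟫ - ⟪v, intOp β₀ (X ω)⟫ := by
      rw [hεdef]
      exact inner_sub_right v (Y ω) (intOp β₀ (X ω))
    rw [this]
    ring
  -- the quadratic expansion
  have hexp : ∀ b, ∫ ω, ‖Y ω - intOp b (X ω)‖ ^ 2 ∂P =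
      (∫ ω, ‖ε ω‖ ^ 2 ∂P) - 2 * ⟪b - β₀, M⟫ + ∫ ω, ‖intOp (b - β₀) (X ω)‖ ^ 2 ∂P := by
    intro b
    set c := b - β₀ with hc
    have hdecomp : ∀ ω, Y ω - intOp b (X ω) = ε ω - intOp c (X ω) := by
      intro ω
      rw [hεdef, hc, intOp_sub_kernel]
      exact (sub_sub_sub_cancel_right _ _ _).symm
    have hint1 : Integrable (fun ω => ‖ε ω‖ ^ 2) P :=
      (memLp_two_iff_integrable_sq_norm hεm).mp hεL2
    have hint3 : Integrable (fun ω => ‖intOp c (X ω)‖ ^ 2) P :=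
      (memLp_two_iff_integrable_sq_norm (hTm c)).mp (hTL2 c)
    have hint2 : Integrable (fun ω => ⟪ε ω, intOp c (X ω)⟫) P := by
      refine Integrable.mono' (memℒp_mul_integrable hεL2.norm (hTL2 c).norm) ?_ ?_
      · exact (continuous_inner (𝕜 := ℝ)).comp_aestronglyMeasurable (hεm.prodMk (hTm c))
      · exact Filter.Eventually.of_forall fun ω => norm_inner_le_norm _ _
    have hcross : ∫ ω, ⟪ε ω, intOp c (X ω)⟫ ∂P = ⟪c, M⟫ := by
      rw [hMinner c]
      refine integral_congr_ae (Filter.Eventually.of_forall fun ω => ?_)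
      beta_reduce
      rw [inner_intOp]
    calc ∫ ω, ‖Y ω - intOp b (X ω)‖ ^ 2 ∂P
        = ∫ ω, (‖ε ω‖ ^ 2 - 2 * ⟪ε ω, intOp c (X ω)⟫ + ‖intOp c (X ω)‖ ^ 2) ∂P := by
          refine integral_congr_ae (Filter.Eventually.of_forall fun ω => ?_)
          beta_reduce
          rw [hdecomp ω, norm_sub_sq_real]
    _ = (∫ ω, (‖ε ω‖ ^ 2 - 2 * ⟪ε ω, intOp c (X ω)⟫) ∂P) + ∫ ω, ‖intOp c (X ω)‖ ^ 2 ∂P :=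
          integral_add (hint1.sub (hint2.const_mul 2)) hint3
    _ = (∫ ω, ‖ε ω‖ ^ 2 ∂P) - (∫ ω, 2 * ⟪ε ω, intOp c (X ω)⟫ ∂P) +
          ∫ ω, ‖intOp c (X ω)‖ ^ 2 ∂P := by
          rw [integral_sub hint1 (hint2.const_mul 2)]
    _ = (∫ ω, ‖ε ω‖ ^ 2 ∂P) - 2 * ⟪c, M⟫ + ∫ ω, ‖intOp c (X ω)‖ ^ 2 ∂P := by
          rw [integral_const_mul, hcross]
  have hJβ₀ : ∫ ω, ‖Y ω - intOp β₀ (X ω)‖ ^ 2 ∂P = ∫ ω, ‖ε ω‖ ^ 2 ∂P := rfl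
  -- putting things together
  constructor
  · constructor
    · rintro ⟨_, h2⟩
      have hM0 : M = 0 := by
        apply eq_zero_of_inner_tensor
        intro u v
        rw [hMten u v]
        exact h2 u v
      rw [hM0] at hMeq
      exact (sub_eq_zero.mp hMeq.symm).symm
    · intro hnormEq
      have hM0 : M = 0 := by rw [hMeq, hnormEq, sub_self]
      refine ⟨hEε, fun u v => ?_⟩
      have := hMten u v
      rw [hM0, inner_zero_right] at this
      exact this.symm
  · constructor
    · intro hnormEq b
      have hM0 : M = 0 := by rw [hMeq, hnormEq, sub_self]
      rw [hexp b, hM0, inner_zero_right, hJβ₀]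
      have h3 : 0 ≤ ∫ ω, ‖intOp (b - β₀) (X ω)‖ ^ 2 ∂P :=
        integral_nonneg fun ω => sq_nonneg _
      linarith
    · intro hmin
      have hM0 : M = 0 := by
        apply eq_zero_of_inner_tensor
        intro u v
        set t : Lp ℝ 2 ((leb a₁ b₁).prod (leb a₂ b₂)) := tensor u v with ht
        set A : ℝ := ⟪t, M⟫ with hA
        set B : ℝ := ∫ ω, ‖intOp t (X ω)‖ ^ 2 ∂P with hB
        have hB0 : 0 ≤ B := integral_nonneg fun ω => sq_nonneg _
        have hkey : ∀ s : ℝ, 0 ≤ -2 * (s * A) + s ^ 2 * B := by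
          intro s
          have h := hmin (β₀ + s • t)
          rw [hexp (β₀ + s • t), hJβ₀, add_sub_cancel_left] at h
          have h2 : ∫ ω, ‖intOp (s • t) (X ω)‖ ^ 2 ∂P = s ^ 2 * B := by
            rw [hB, ← integral_const_mul]
            refine integral_congr_ae (Filter.Eventually.of_forall fun ω => ?_)
            beta_reduce
            rw [intOp_smul_kernel, norm_smul, Real.norm_eq_abs, mul_pow, sq_abs]
          rw [h2, real_inner_smul_left, ← hA] at h
          linarith
        have hAzero : A = 0 := by
          have h1 := hkey (A / (B + 1))
          have hB1 : (0:ℝ) < B + 1 := by linarith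
          have he : -2 * ((A / (B + 1)) * A) + (A / (B + 1)) ^ 2 * B =
              (-(A ^ 2) * (B + 2)) / (B + 1) ^ 2 := by
            field_simp
            ring
          rw [he] at h1
          have h4 : 0 ≤ -(A ^ 2) * (B + 2) := by
            by_contra hneg
            push_neg at hneg
            have : (-(A ^ 2) * (B + 2)) / (B + 1) ^ 2 < 0 :=
              div_neg_of_neg_of_pos hneg (by positivity)
            linarith
          have h5 : A ^ 2 = 0 := by nlinarith [sq_nonneg A]
          exact (pow_eq_zero_iff two_ne_zero).mp h5
        exact hAzero
      rw [hM0] at hMeq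
      exact (sub_eq_zero.mp hMeq.symm).symm
end FLR
end
end

section
/- Assume Condition (C2). Then ∑_{m,j=1}^∞ (E[ξ_m ζ_j])²/(λ_Xm λ_Yj) < ∞, so that the operator R : L²(T₂) → L²(T₁) defined by R v = ∑_{m,j} (E[ξ_m ζ_j]/(λ_Xm λ_Yj)^{1/2}) ⟨φ_j, v⟩ θ_m is a well-defined Hilbert–Schmidt operator, and it satisfies R_XY = R_XX^{1/2} ∘ R ∘ R_YY^{1/2}. -/
open MeasureTheory Filter
open scoped RealInnerProductSpace ENNReal NNReal Topology

noncomputable section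

namespace FLR

variable {α β Ω : Type*} [MeasurableSpace α] [MeasurableSpace β] [MeasurableSpace Ω]

section Helpers

variable {ι E F : Type*} [NormedAddCommGroup E] [InnerProductSpace ℝ E] [CompleteSpace E]
  [NormedAddCommGroup F] [InnerProductSpace ℝ F] [CompleteSpace F]

lemma summable_smul_of_orthonormal {v : ι → E} (hv : Orthonormal ℝ v) {c : ι → ℝ}
    (hc : Summable fun i => c i ^ 2) : Summable fun i => c i • v i := by
  have h := (hv.orthogonalFamily.summable_iff_norm_sq_summable c).2 (by
    simpa [Real.norm_eq_abs, sq_abs] using hc)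
  simpa [LinearIsometry.toSpanSingleton_apply] using h

lemma orthonormal_expansion {v : ι → E} (hv : Orthonormal ℝ v) {c : ι → ℝ}
    (hc : Summable fun i => c i ^ 2) :
    ∃ S : E, HasSum (fun i => c i • v i) S ∧ (∀ k, ⟪v k, S⟫ = c k) ∧
      HasSum (fun i => c i ^ 2) (‖S‖ ^ 2) := by
  classical
  obtain ⟨S, hS⟩ := summable_smul_of_orthonormal hv hc
  have hinner : ∀ k, ⟪v k, S⟫ = c k := by
    intro k
    have h1 := (innerSL ℝ (v k)).hasSum hS
    have h2 : (fun i => (innerSL ℝ (v k)) (c i • v i)) = fun i => if i = k then c k else 0 := by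
      funext i
      by_cases h : i = k
      · subst h
        simp [innerSL_apply_apply, real_inner_smul_right, real_inner_self_eq_norm_sq, hv.1 i]
      · simp [innerSL_apply_apply, h, real_inner_smul_right, hv.2 (Ne.symm h)]
    rw [h2] at h1
    exact (h1.unique (hasSum_ite_eq k (c k)))
  refine ⟨S, hS, hinner, ?_⟩
  have h3 := (innerSL ℝ S).hasSum hS
  have h4 : (fun i => (innerSL ℝ S) (c i • v i)) = fun i => c i ^ 2 := by
    funext i
    have := hinner i
    simp only [innerSL_apply_apply, real_inner_smul_right]
    rw [real_inner_comm, this]; ring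
  rw [h4] at h3
  have h5 : ⟪S, S⟫ = ‖S‖ ^ 2 := real_inner_self_eq_norm_sq S
  simpa [h5] using h3

omit [CompleteSpace E] in
lemma sqrt_eigen {A : E →L[ℝ] E} (hsa : ∀ w w', ⟪A w, w'⟫ = ⟪w, A w'⟫)
    (hpos : ∀ w, 0 ≤ ⟪A w, w⟫) {θ : E} {lam : ℝ} (hlam : 0 < lam)
    (h2 : A (A θ) = lam • θ) : A θ = Real.sqrt lam • θ := by
  clear hsa
  have hss : Real.sqrt lam * Real.sqrt lam = lam := Real.mul_self_sqrt hlam.le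
  set q := A θ - Real.sqrt lam • θ with hqdef
  have hAq : A q = -Real.sqrt lam • q := by
    have e1 : A q = lam • θ - Real.sqrt lam • A θ := by
      simp [hqdef, map_sub, _root_.map_smul, h2]
    have e2 : -Real.sqrt lam • q = lam • θ - Real.sqrt lam • A θ := by
      rw [hqdef, neg_smul, smul_sub, smul_smul, hss, neg_sub]
    rw [e1, e2]
  have h0 : 0 ≤ ⟪A q, q⟫ := hpos q
  rw [hAq, neg_smul, inner_neg_left, real_inner_smul_left] at h0
  have hsl : 0 < Real.sqrt lam := Real.sqrt_pos.2 hlam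
  have hqq : ⟪q, q⟫ ≤ 0 := by nlinarith
  have : q = 0 := by rwa [real_inner_self_nonpos] at hqq
  rw [hqdef] at this
  exact sub_eq_zero.mp this

variable {Ω : Type*} [MeasurableSpace Ω] {P : Measure Ω} [IsProbabilityMeasure P]
variable {Z : Ω → E} {W : Ω → F}

omit [CompleteSpace E] [IsProbabilityMeasure P] in
lemma aux_meas (hZm : AEStronglyMeasurable Z P) (u : E) :
    AEStronglyMeasurable (fun ω => ⟪u, Z ω⟫) P :=
  AEStronglyMeasurable.inner aestronglyMeasurable_const hZm

omit [CompleteSpace E] [IsProbabilityMeasure P] in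
lemma memL2_inner (hZm : AEStronglyMeasurable Z P)
    (hZ2 : Integrable (fun ω => ‖Z ω‖ ^ 2) P) (u : E) :
    MemLp (fun ω => ⟪u, Z ω⟫) 2 P := by
  rw [memLp_two_iff_integrable_sq (aux_meas hZm u)]
  refine (hZ2.const_mul (‖u‖ ^ 2)).mono' ?_ ?_
  · have h : (fun ω => ⟪u, Z ω⟫ ^ 2) = fun ω => ⟪u, Z ω⟫ * ⟪u, Z ω⟫ := by
      funext ω; ring
    rw [h]
    exact (aux_meas hZm u).mul (aux_meas hZm u)
  · refine Filter.Eventually.of_forall fun ω => ?_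
    have h1 : |⟪u, Z ω⟫| ≤ ‖u‖ * ‖Z ω‖ := abs_real_inner_le_norm u (Z ω)
    have h2 : ‖⟪u, Z ω⟫ ^ 2‖ = |⟪u, Z ω⟫| ^ 2 := by
      rw [Real.norm_eq_abs, ← pow_abs]
    rw [h2]
    calc |⟪u, Z ω⟫| ^ 2 ≤ (‖u‖ * ‖Z ω‖) ^ 2 := by
          exact pow_le_pow_left₀ (abs_nonneg _) h1 2
      _ = ‖u‖ ^ 2 * ‖Z ω‖ ^ 2 := by ring

omit [CompleteSpace E] [CompleteSpace F] [IsProbabilityMeasure P] in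
lemma integrable_inner_smul (hZm : AEStronglyMeasurable Z P)
    (hZ2 : Integrable (fun ω => ‖Z ω‖ ^ 2) P) (hWm : AEStronglyMeasurable W P)
    (hW2 : Integrable (fun ω => ‖W ω‖ ^ 2) P) (w : F) :
    Integrable (fun ω => ⟪w, W ω⟫ • Z ω) P := by
  refine ((hW2.add hZ2).const_mul (‖w‖ + 1)).mono'
    ((aux_meas hWm w).smul hZm) ?_
  refine Filter.Eventually.of_forall fun ω => ?_
  have h1 : |⟪w, W ω⟫| ≤ ‖w‖ * ‖W ω‖ := abs_real_inner_le_norm w (W ω)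
  have h2 : ‖⟪w, W ω⟫ • Z ω‖ = |⟪w, W ω⟫| * ‖Z ω‖ := by
    rw [norm_smul, Real.norm_eq_abs]
  rw [h2]
  have h3 : ‖W ω‖ * ‖Z ω‖ ≤ ‖W ω‖ ^ 2 + ‖Z ω‖ ^ 2 := by nlinarith [sq_nonneg (‖W ω‖ - ‖Z ω‖)]
  have h4 : (0:ℝ) ≤ ‖W ω‖ * ‖Z ω‖ := by positivity
  have h5 : ‖w‖ ≤ ‖w‖ + 1 := by linarith
  calc |⟪w, W ω⟫| * ‖Z ω‖ ≤ (‖w‖ * ‖W ω‖) * ‖Z ω‖ := by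
        exact mul_le_mul_of_nonneg_right h1 (norm_nonneg _)
    _ = ‖w‖ * (‖W ω‖ * ‖Z ω‖) := by ring
    _ ≤ (‖w‖ + 1) * (‖W ω‖ ^ 2 + ‖Z ω‖ ^ 2) := by
        refine mul_le_mul h5 h3 h4 (by positivity)

omit [CompleteSpace F] [IsProbabilityMeasure P] in
lemma inner_covInt (hZm : AEStronglyMeasurable Z P)
    (hZ2 : Integrable (fun ω => ‖Z ω‖ ^ 2) P) (hWm : AEStronglyMeasurable W P)
    (hW2 : Integrable (fun ω => ‖W ω‖ ^ 2) P) (u : E) (w : F) :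
    ⟪u, ∫ ω, ⟪w, W ω⟫ • Z ω ∂P⟫ = ∫ ω, ⟪w, W ω⟫ * ⟪u, Z ω⟫ ∂P := by
  rw [← integral_inner (integrable_inner_smul hZm hZ2 hWm hW2 w) u]
  congr 1
  funext ω
  rw [real_inner_smul_right]

omit [CompleteSpace E] in
/-- The map `u ↦ (ω ↦ ⟪u, Z ω⟫)` as a continuous linear map into `L²(P)`. -/
def toL2 (hZm : AEStronglyMeasurable Z P) (hZ2 : Integrable (fun ω => ‖Z ω‖ ^ 2) P) :
    E →L[ℝ] Lp ℝ 2 P :=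
  LinearMap.mkContinuous
    { toFun := fun u => (memL2_inner hZm hZ2 u).toLp _
      map_add' := fun u v => by
        rw [← MemLp.toLp_add (memL2_inner hZm hZ2 u) (memL2_inner hZm hZ2 v)]
        exact MemLp.toLp_congr (memL2_inner hZm hZ2 (u + v))
          ((memL2_inner hZm hZ2 u).add (memL2_inner hZm hZ2 v))
          (Filter.Eventually.of_forall fun ω => by simp [inner_add_left])
      map_smul' := fun r u => by
        rw [RingHom.id_apply, ← MemLp.toLp_const_smul r (memL2_inner hZm hZ2 u)]
        exact MemLp.toLp_congr (memL2_inner hZm hZ2 (r • u))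
          ((memL2_inner hZm hZ2 u).const_smul r)
          (Filter.Eventually.of_forall fun ω => by simp [inner_smul_left]) }
    (Real.sqrt (∫ ω, ‖Z ω‖ ^ 2 ∂P)) (by
      intro u
      set CZ := ∫ ω, ‖Z ω‖ ^ 2 ∂P with hCZ
      have h0 : 0 ≤ CZ := integral_nonneg fun ω => sq_nonneg _
      have hmem := memL2_inner hZm hZ2 u
      show ‖hmem.toLp _‖ ≤ Real.sqrt CZ * ‖u‖
      have hn : ‖hmem.toLp _‖ ^ 2 = ∫ ω, ⟪u, Z ω⟫ ^ 2 ∂P := by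
        rw [← real_inner_self_eq_norm_sq, L2.inner_def]
        refine integral_congr_ae ?_
        filter_upwards [hmem.coeFn_toLp] with ω h1
        rw [h1]
        simp [RCLike.inner_apply, sq]
      have hle : ∫ ω, ⟪u, Z ω⟫ ^ 2 ∂P ≤ ‖u‖ ^ 2 * CZ := by
        calc ∫ ω, ⟪u, Z ω⟫ ^ 2 ∂P ≤ ∫ ω, ‖u‖ ^ 2 * ‖Z ω‖ ^ 2 ∂P := by
              refine integral_mono hmem.integrable_sq (hZ2.const_mul _) fun ω => ?_
              have h1 := abs_real_inner_le_norm u (Z ω)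
              nlinarith [abs_nonneg ⟪u, Z ω⟫, sq_abs ⟪u, Z ω⟫, norm_nonneg u,
                norm_nonneg (Z ω)]
          _ = ‖u‖ ^ 2 * CZ := by rw [integral_const_mul]
      have hsq : ‖hmem.toLp _‖ ^ 2 ≤ (Real.sqrt CZ * ‖u‖) ^ 2 := by
        rw [mul_pow, Real.sq_sqrt h0]
        rw [hn]
        linarith [hle]
      have := Real.sqrt_le_sqrt hsq
      rwa [Real.sqrt_sq (norm_nonneg _), Real.sqrt_sq (by positivity)] at this)

omit [CompleteSpace E] [CompleteSpace F] [IsProbabilityMeasure P] in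
lemma toL2_inner (hZm : AEStronglyMeasurable Z P) (hZ2 : Integrable (fun ω => ‖Z ω‖ ^ 2) P)
    (hWm : AEStronglyMeasurable W P) (hW2 : Integrable (fun ω => ‖W ω‖ ^ 2) P) (u : E) (w : F) :
    ⟪toL2 hZm hZ2 u, toL2 hWm hW2 w⟫ = ∫ ω, ⟪u, Z ω⟫ * ⟪w, W ω⟫ ∂P := by
  have hu : toL2 hZm hZ2 u = (memL2_inner hZm hZ2 u).toLp _ := rfl
  have hw : toL2 hWm hW2 w = (memL2_inner hWm hW2 w).toLp _ := rfl
  rw [hu, hw, L2.inner_def]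
  refine integral_congr_ae ?_
  filter_upwards [MemLp.coeFn_toLp (memL2_inner hZm hZ2 u),
    MemLp.coeFn_toLp (memL2_inner hWm hW2 w)] with ω h1 h2
  rw [h1, h2]
  simp [RCLike.inner_apply]
  ring

omit [CompleteSpace E] [IsProbabilityMeasure P] in
lemma toL2_norm_sq_le (hZm : AEStronglyMeasurable Z P)
    (hZ2 : Integrable (fun ω => ‖Z ω‖ ^ 2) P) (u : E) :
    ‖toL2 hZm hZ2 u‖ ^ 2 ≤ (∫ ω, ‖Z ω‖ ^ 2 ∂P) * ‖u‖ ^ 2 := by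
  rw [← real_inner_self_eq_norm_sq, toL2_inner hZm hZ2 hZm hZ2]
  calc ∫ ω, ⟪u, Z ω⟫ * ⟪u, Z ω⟫ ∂P ≤ ∫ ω, ‖u‖ ^ 2 * ‖Z ω‖ ^ 2 ∂P := by
        refine integral_mono ?_ (hZ2.const_mul _) fun ω => ?_
        · have h := (memL2_inner hZm hZ2 u).integrable_sq
          refine h.congr (Filter.Eventually.of_forall fun ω => by ring)
        · have h1 := abs_real_inner_le_norm u (Z ω)
          nlinarith [abs_nonneg ⟪u, Z ω⟫, sq_abs ⟪u, Z ω⟫, norm_nonneg u, norm_nonneg (Z ω)]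
    _ = ‖u‖ ^ 2 * (∫ ω, ‖Z ω‖ ^ 2 ∂P) := by rw [integral_const_mul]
    _ = (∫ ω, ‖Z ω‖ ^ 2 ∂P) * ‖u‖ ^ 2 := mul_comm _ _

end Helpers

set_option maxHeartbeats 2000000 in
/-- assume Condition (C2).  Then
`∑_{m,j} (E[ξ_m ζ_j])²/(λ_Xm λ_Yj) < ∞`, so that
`R v = ∑_{m,j} (E[ξ_m ζ_j]/(λ_Xm λ_Yj)^{1/2}) ⟨φ_j, v⟩ θ_m` defines a Hilbert–Schmidt
operator `R : L²(T₂) → L²(T₁)`, and `R_XY = R_XX^{1/2} ∘ R ∘ R_YY^{1/2}`. -/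
theorem correlation_operator_hilbertSchmidt_factorization
    (a₁ b₁ a₂ b₂ : ℝ) {Ω : Type*} [MeasurableSpace Ω]
    (P : Measure Ω) [IsProbabilityMeasure P]
    (X : Ω → Lp ℝ 2 (leb a₁ b₁)) (Y : Ω → Lp ℝ 2 (leb a₂ b₂))
    (hXm : AEStronglyMeasurable X P) (hYm : AEStronglyMeasurable Y P)
    (hX2 : Integrable (fun ω => ‖X ω‖ ^ 2) P) (hY2 : Integrable (fun ω => ‖Y ω‖ ^ 2) P)
    (hX0 : ∀ u, ∫ ω, ⟪u, X ω⟫ ∂P = 0) (hY0 : ∀ v, ∫ ω, ⟪v, Y ω⟫ ∂P = 0)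
    (θ : ℕ → Lp ℝ 2 (leb a₁ b₁)) (φ : ℕ → Lp ℝ 2 (leb a₂ b₂))
    (lamX lamY : ℕ → ℝ)
    (hθon : Orthonormal ℝ θ) (hφon : Orthonormal ℝ φ)
    (hlamX : ∀ m, 0 < lamX m) (hlamY : ∀ j, 0 < lamY j)
    (hθeig : ∀ m, covOp P X X (θ m) = lamX m • θ m)
    (hφeig : ∀ j, covOp P Y Y (φ j) = lamY j • φ j)
    (hθspan : ∀ u, covOp P X X u = 0 ↔ ∀ m, ⟪θ m, u⟫ = 0)
    (hφspan : ∀ v, covOp P Y Y v = 0 ↔ ∀ j, ⟪φ j, v⟫ = 0)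
    (hC2 : Summable (fun mj : ℕ × ℕ =>
      ((∫ ω, ⟪θ mj.1, X ω⟫ * ⟪φ mj.2, Y ω⟫ ∂P) / (lamX mj.1 * Real.sqrt (lamY mj.2))) ^ 2))
    (sqXX : Lp ℝ 2 (leb a₁ b₁) →L[ℝ] Lp ℝ 2 (leb a₁ b₁))
    (sqYY : Lp ℝ 2 (leb a₂ b₂) →L[ℝ] Lp ℝ 2 (leb a₂ b₂))
    (hsqXX : ∀ w, sqXX (sqXX w) = covOp P X X w)
    (hsqXXsa : ∀ w w', ⟪sqXX w, w'⟫ = ⟪w, sqXX w'⟫)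
    (hsqXXpos : ∀ w, 0 ≤ ⟪sqXX w, w⟫)
    (hsqYY : ∀ w, sqYY (sqYY w) = covOp P Y Y w)
    (hsqYYsa : ∀ w w', ⟪sqYY w, w'⟫ = ⟪w, sqYY w'⟫)
    (hsqYYpos : ∀ w, 0 ≤ ⟪sqYY w, w⟫) :
    Summable (fun mj : ℕ × ℕ =>
      (∫ ω, ⟪θ mj.1, X ω⟫ * ⟪φ mj.2, Y ω⟫ ∂P) ^ 2 / (lamX mj.1 * lamY mj.2)) ∧
    ∃ R : Lp ℝ 2 (leb a₂ b₂) →L[ℝ] Lp ℝ 2 (leb a₁ b₁),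
      (∀ w, HasSum (fun mj : ℕ × ℕ =>
        ((∫ ω, ⟪θ mj.1, X ω⟫ * ⟪φ mj.2, Y ω⟫ ∂P) / Real.sqrt (lamX mj.1 * lamY mj.2) *
          ⟪φ mj.2, w⟫) • θ mj.1) (R w)) ∧
      (∀ e : ℕ → Lp ℝ 2 (leb a₂ b₂), Orthonormal ℝ e → Summable (fun i => ‖R (e i)‖ ^ 2)) ∧
      (∀ w, covOp P X Y w = sqXX (R (sqYY w))) := by
  classical
  -- Abbreviations
  let c : ℕ × ℕ → ℝ := fun mj => ∫ ω, ⟪θ mj.1, X ω⟫ * ⟪φ mj.2, Y ω⟫ ∂P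
  let FX : Lp ℝ 2 (leb a₁ b₁) →L[ℝ] Lp ℝ 2 P := toL2 hXm hX2
  let FY : Lp ℝ 2 (leb a₂ b₂) →L[ℝ] Lp ℝ 2 P := toL2 hYm hY2
  -- basic inner product identities
  have f1 : ∀ u v, ⟪FX u, FX v⟫ = ⟪u, covOp P X X v⟫ := by
    intro u v
    have e : covOp P X X v = ∫ ω, ⟪v, X ω⟫ • X ω ∂P := rfl
    rw [e, inner_covInt hXm hX2 hXm hX2]
    show ⟪toL2 hXm hX2 u, toL2 hXm hX2 v⟫ = _
    rw [toL2_inner hXm hX2 hXm hX2]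
    exact integral_congr_ae (Filter.Eventually.of_forall fun ω => mul_comm _ _)
  have g1 : ∀ u v, ⟪FY u, FY v⟫ = ⟪u, covOp P Y Y v⟫ := by
    intro u v
    have e : covOp P Y Y v = ∫ ω, ⟪v, Y ω⟫ • Y ω ∂P := rfl
    rw [e, inner_covInt hYm hY2 hYm hY2]
    show ⟪toL2 hYm hY2 u, toL2 hYm hY2 v⟫ = _
    rw [toL2_inner hYm hY2 hYm hY2]
    exact integral_congr_ae (Filter.Eventually.of_forall fun ω => mul_comm _ _)
  have f2 : ∀ u w, ⟪FX u, FY w⟫ = ⟪u, covOp P X Y w⟫ := by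
    intro u w
    have e : covOp P X Y w = ∫ ω, ⟪w, Y ω⟫ • X ω ∂P := rfl
    rw [e, inner_covInt hXm hX2 hYm hY2]
    show ⟪toL2 hXm hX2 u, toL2 hYm hY2 w⟫ = _
    rw [toL2_inner hXm hX2 hYm hY2]
    exact integral_congr_ae (Filter.Eventually.of_forall fun ω => mul_comm _ _)
  have f4 : ∀ mj : ℕ × ℕ, ⟪FX (θ mj.1), FY (φ mj.2)⟫ = c mj := by
    intro mj
    show ⟪toL2 hXm hX2 _, toL2 hYm hY2 _⟫ = _
    rw [toL2_inner hXm hX2 hYm hY2]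
  -- eigenvalue identities
  have hθnorm : ∀ m, ⟪θ m, θ m⟫ = 1 := by
    intro m
    rw [real_inner_self_eq_norm_sq, hθon.1 m]; norm_num
  have hφnorm : ∀ j, ⟪φ j, φ j⟫ = 1 := by
    intro j
    rw [real_inner_self_eq_norm_sq, hφon.1 j]; norm_num
  have hFXθ : ∀ m, ‖FX (θ m)‖ ^ 2 = lamX m := by
    intro m
    rw [← real_inner_self_eq_norm_sq, f1, hθeig m, real_inner_smul_right, hθnorm m, mul_one]
  have hFYφ : ∀ j, ‖FY (φ j)‖ ^ 2 = lamY j := by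
    intro j
    rw [← real_inner_self_eq_norm_sq, g1, hφeig j, real_inner_smul_right, hφnorm j, mul_one]
  have hFXθ' : ∀ m, ‖FX (θ m)‖ = Real.sqrt (lamX m) := by
    intro m; rw [← hFXθ m, Real.sqrt_sq (norm_nonneg _)]
  have hFYφ' : ∀ j, ‖FY (φ j)‖ = Real.sqrt (lamY j) := by
    intro j; rw [← hFYφ j, Real.sqrt_sq (norm_nonneg _)]
  -- bound on eigenvalues
  set CX := ∫ ω, ‖X ω‖ ^ 2 ∂P with hCXdef
  have hCX0 : 0 ≤ CX := integral_nonneg fun ω => sq_nonneg _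
  have hlamXle : ∀ m, lamX m ≤ CX := by
    intro m
    have := toL2_norm_sq_le hXm hX2 (θ m)
    rw [hθon.1 m] at this
    calc lamX m = ‖FX (θ m)‖ ^ 2 := (hFXθ m).symm
      _ ≤ CX * 1 ^ 2 := this
      _ = CX := by ring
  -- summability of eigenvalues
  have hint_sq : ∀ u, Integrable (fun ω => ⟪u, X ω⟫ ^ 2) P := fun u =>
    (memL2_inner hXm hX2 u).integrable_sq
  have hlamX_int : ∀ m, lamX m = ∫ ω, ⟪θ m, X ω⟫ ^ 2 ∂P := by
    intro m
    rw [← hFXθ m, ← real_inner_self_eq_norm_sq]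
    show ⟪toL2 hXm hX2 _, toL2 hXm hX2 _⟫ = _
    rw [toL2_inner hXm hX2 hXm hX2]
    exact integral_congr_ae (Filter.Eventually.of_forall fun ω => (sq _).symm)
  have hlamXsum : Summable lamX := by
    refine summable_of_sum_le (c := CX) (fun m => (hlamX m).le) fun s => ?_
    have h1 : ∑ m ∈ s, lamX m = ∫ ω, ∑ m ∈ s, ⟪θ m, X ω⟫ ^ 2 ∂P := by
      rw [integral_finset_sum s fun m _ => hint_sq (θ m)]
      exact Finset.sum_congr rfl fun m _ => hlamX_int m
    rw [h1, hCXdef]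
    refine integral_mono (integrable_finset_sum s fun m _ => hint_sq (θ m)) hX2 fun ω => ?_
    have := hθon.sum_inner_products_le (X ω) (s := s)
    simpa [Real.norm_eq_abs, sq_abs] using this
  -- Bessel
  have hBesselX : ∀ u, Summable fun m => ⟪θ m, u⟫ ^ 2 := by
    intro u
    have := hθon.inner_products_summable u
    simpa [Real.norm_eq_abs, sq_abs] using this
  have hBesselY : ∀ w, Summable fun j => ⟪φ j, w⟫ ^ 2 := by
    intro w
    have := hφon.inner_products_summable w
    simpa [Real.norm_eq_abs, sq_abs] using this
  -- FX kills the orthocomplement of the θ's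
  have hFXperp : ∀ r, (∀ m, ⟪θ m, r⟫ = 0) → FX r = 0 := by
    intro r hr
    have h1 : covOp P X X r = 0 := (hθspan r).2 hr
    have h2 : ‖FX r‖ ^ 2 = 0 := by
      rw [← real_inner_self_eq_norm_sq, f1, h1, inner_zero_right]
    have := pow_eq_zero_iff (n := 2) (by norm_num) |>.1 h2
    exact norm_eq_zero.1 this
  have hFYperp : ∀ r, (∀ j, ⟪φ j, r⟫ = 0) → FY r = 0 := by
    intro r hr
    have h1 : covOp P Y Y r = 0 := (hφspan r).2 hr
    have h2 : ‖FY r‖ ^ 2 = 0 := by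
      rw [← real_inner_self_eq_norm_sq, g1, h1, inner_zero_right]
    have := pow_eq_zero_iff (n := 2) (by norm_num) |>.1 h2
    exact norm_eq_zero.1 this
  -- expansion of FX u
  have hFXsum : ∀ u, HasSum (fun m => ⟪θ m, u⟫ • FX (θ m)) (FX u) := by
    intro u
    obtain ⟨S, hS, hSk, -⟩ := orthonormal_expansion hθon (hBesselX u)
    have h1 := FX.hasSum hS
    simp only [_root_.map_smul] at h1
    have h2 : FX u = FX S := by
      have h3 : FX (u - S) = 0 := hFXperp _ fun m => by
        rw [inner_sub_right, hSk m, sub_self]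
      rw [map_sub] at h3
      exact sub_eq_zero.1 h3
    rw [h2]
    exact h1
  have hFYsum : ∀ w, HasSum (fun j => ⟪φ j, w⟫ • FY (φ j)) (FY w) := by
    intro w
    obtain ⟨S, hS, hSk, -⟩ := orthonormal_expansion hφon (hBesselY w)
    have h1 := FY.hasSum hS
    simp only [_root_.map_smul] at h1
    have h2 : FY w = FY S := by
      have h3 : FY (w - S) = 0 := hFYperp _ fun j => by
        rw [inner_sub_right, hSk j, sub_self]
      rw [map_sub] at h3
      exact sub_eq_zero.1 h3
    rw [h2]
    exact h1
  -- row expansions of inner products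
  have hrowX : ∀ u (x : Lp ℝ 2 P), HasSum (fun m => ⟪θ m, u⟫ * ⟪FX (θ m), x⟫) ⟪FX u, x⟫ := by
    intro u x
    have h1 := (innerSL ℝ x).hasSum (hFXsum u)
    simp only [innerSL_apply_apply, real_inner_smul_right] at h1
    simpa only [real_inner_comm x] using h1
  have hrowY : ∀ w (x : Lp ℝ 2 P), HasSum (fun j => ⟪φ j, w⟫ * ⟪FY (φ j), x⟫) ⟪FY w, x⟫ := by
    intro w x
    have h1 := (innerSL ℝ x).hasSum (hFYsum w)
    simp only [innerSL_apply_apply, real_inner_smul_right] at h1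
    simpa only [real_inner_comm x] using h1
  have f4' : ∀ m j, ⟪FX (θ m), FY (φ j)⟫ = c (m, j) := fun m j => f4 (m, j)
  -- Y-side eigenvalue summability
  have hint_sqY : ∀ w, Integrable (fun ω => ⟪w, Y ω⟫ ^ 2) P := fun w =>
    (memL2_inner hYm hY2 w).integrable_sq
  have hlamY_int : ∀ j, lamY j = ∫ ω, ⟪φ j, Y ω⟫ ^ 2 ∂P := by
    intro j
    rw [← hFYφ j, ← real_inner_self_eq_norm_sq]
    show ⟪toL2 hYm hY2 _, toL2 hYm hY2 _⟫ = _
    rw [toL2_inner hYm hY2 hYm hY2]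
    exact integral_congr_ae (Filter.Eventually.of_forall fun ω => (sq _).symm)
  have hlamYsum : Summable lamY := by
    refine summable_of_sum_le (c := ∫ ω, ‖Y ω‖ ^ 2 ∂P) (fun j => (hlamY j).le) fun s => ?_
    have h1 : ∑ j ∈ s, lamY j = ∫ ω, ∑ j ∈ s, ⟪φ j, Y ω⟫ ^ 2 ∂P := by
      rw [integral_finset_sum s fun j _ => hint_sqY (φ j)]
      exact Finset.sum_congr rfl fun j _ => hlamY_int j
    rw [h1]
    refine integral_mono (integrable_finset_sum s fun j _ => hint_sqY (φ j)) hY2 fun ω => ?_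
    have := hφon.sum_inner_products_le (Y ω) (s := s)
    simpa [Real.norm_eq_abs, sq_abs] using this
  -- the core double expansion
  have hcore : ∀ u w, HasSum (fun mj : ℕ × ℕ => c mj * ⟪θ mj.1, u⟫ * ⟪φ mj.2, w⟫)
      ⟪FX u, FY w⟫ := by
    intro u w
    have hcabs : ∀ mj : ℕ × ℕ, |c mj| ≤ Real.sqrt (lamX mj.1) * Real.sqrt (lamY mj.2) := by
      intro mj
      rw [← f4 mj, ← hFXθ' mj.1, ← hFYφ' mj.2]
      exact abs_real_inner_le_norm _ _
    have hp : Summable fun m => Real.sqrt (lamX m) * |⟪θ m, u⟫| := by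
      refine Summable.of_nonneg_of_le (fun m => by positivity) (fun m => ?_)
        ((hlamXsum.add (hBesselX u)).div_const 2)
      have h1 : 0 ≤ lamX m := (hlamX m).le
      nlinarith [sq_nonneg (Real.sqrt (lamX m) - |⟪θ m, u⟫|), Real.sq_sqrt h1,
        sq_abs ⟪θ m, u⟫]
    have hq : Summable fun j => Real.sqrt (lamY j) * |⟪φ j, w⟫| := by
      refine Summable.of_nonneg_of_le (fun j => by positivity) (fun j => ?_)
        ((hlamYsum.add (hBesselY w)).div_const 2)
      have h1 : 0 ≤ lamY j := (hlamY j).le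
      nlinarith [sq_nonneg (Real.sqrt (lamY j) - |⟪φ j, w⟫|), Real.sq_sqrt h1,
        sq_abs ⟪φ j, w⟫]
    have hpq : Summable (fun mj : ℕ × ℕ =>
        (Real.sqrt (lamX mj.1) * |⟪θ mj.1, u⟫|) * (Real.sqrt (lamY mj.2) * |⟪φ mj.2, w⟫|)) :=
      hp.mul_of_nonneg hq (fun m => by positivity) (fun j => by positivity)
    have hsum : Summable (fun mj : ℕ × ℕ => c mj * ⟪θ mj.1, u⟫ * ⟪φ mj.2, w⟫) := by
      refine Summable.of_abs (Summable.of_nonneg_of_le (fun mj => abs_nonneg _)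
        (fun mj => ?_) hpq)
      rw [abs_mul, abs_mul]
      calc |c mj| * |⟪θ mj.1, u⟫| * |⟪φ mj.2, w⟫|
          ≤ Real.sqrt (lamX mj.1) * Real.sqrt (lamY mj.2) * |⟪θ mj.1, u⟫| * |⟪φ mj.2, w⟫| := by
            exact mul_le_mul_of_nonneg_right
              (mul_le_mul_of_nonneg_right (hcabs mj) (abs_nonneg _)) (abs_nonneg _)
        _ = (Real.sqrt (lamX mj.1) * |⟪θ mj.1, u⟫|) *
              (Real.sqrt (lamY mj.2) * |⟪φ mj.2, w⟫|) := by ring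
    have hfib : ∀ m, HasSum (fun j => c (m, j) * ⟪θ m, u⟫ * ⟪φ j, w⟫)
        (⟪θ m, u⟫ * ⟪FX (θ m), FY w⟫) := by
      intro m
      have h1 := (hrowY w (FX (θ m))).mul_left ⟪θ m, u⟫
      have h2 : (fun j => ⟪θ m, u⟫ * (⟪φ j, w⟫ * ⟪FY (φ j), FX (θ m)⟫))
          = fun j => c (m, j) * ⟪θ m, u⟫ * ⟪φ j, w⟫ := by
        funext j
        rw [real_inner_comm (FX (θ m)) (FY (φ j)), f4' m j]
        ring
      rw [h2] at h1
      rw [real_inner_comm (FX (θ m)) (FY w)] at h1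
      exact h1
    have h5 : HasSum (fun m => ⟪θ m, u⟫ * ⟪FX (θ m), FY w⟫)
        (∑' mj : ℕ × ℕ, c mj * ⟪θ mj.1, u⟫ * ⟪φ mj.2, w⟫) :=
      hsum.hasSum.prod_fiberwise fun m => hfib m
    have h6 := hrowX u (FY w)
    have h7 := hsum.hasSum
    rw [← h6.unique h5] at h7
    exact h7
  -- Claim 1
  have hC2' : Summable (fun mj : ℕ × ℕ =>
      (c mj / (lamX mj.1 * Real.sqrt (lamY mj.2))) ^ 2) := hC2
  have hclaim1 : Summable (fun mj : ℕ × ℕ => c mj ^ 2 / (lamX mj.1 * lamY mj.2)) := by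
    refine Summable.of_nonneg_of_le
      (fun mj => div_nonneg (sq_nonneg _) (mul_nonneg (hlamX _).le (hlamY _).le))
      (fun mj => ?_) (hC2'.mul_left CX)
    have hx := hlamX mj.1
    have hy := hlamY mj.2
    have hsy : Real.sqrt (lamY mj.2) ^ 2 = lamY mj.2 := Real.sq_sqrt hy.le
    have heq : c mj ^ 2 / (lamX mj.1 * lamY mj.2)
        = lamX mj.1 * (c mj / (lamX mj.1 * Real.sqrt (lamY mj.2))) ^ 2 := by
      rw [div_pow, mul_pow, hsy]
      field_simp
    rw [heq]
    exact mul_le_mul_of_nonneg_right (hlamXle mj.1) (sq_nonneg _)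
  -- the Hilbert-Schmidt operator R
  let a : ℕ × ℕ → ℝ := fun mj => c mj / Real.sqrt (lamX mj.1 * lamY mj.2)
  have ha2 : ∀ mj : ℕ × ℕ, a mj ^ 2 = c mj ^ 2 / (lamX mj.1 * lamY mj.2) := by
    intro mj
    show (c mj / Real.sqrt _) ^ 2 = _
    rw [div_pow, Real.sq_sqrt (mul_nonneg (hlamX _).le (hlamY _).le)]
  have hasum : Summable fun mj : ℕ × ℕ => a mj ^ 2 := by
    simp only [ha2]; exact hclaim1
  choose G hG1 hG2 hG3 using fun m => orthonormal_expansion hφon (hasum.prod_factor m)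
  have hGnorm : HasSum (fun m => ‖G m‖ ^ 2) (∑' mj : ℕ × ℕ, a mj ^ 2) :=
    hasum.hasSum.prod_fiberwise hG3
  set A := ∑' mj : ℕ × ℕ, a mj ^ 2 with hAdef
  have hA0 : 0 ≤ A := tsum_nonneg fun mj => sq_nonneg _
  have hbb : ∀ w m, ⟪G m, w⟫ ^ 2 ≤ ‖G m‖ ^ 2 * ‖w‖ ^ 2 := by
    intro w m
    have h := real_inner_mul_inner_self_le (G m) w
    rw [real_inner_self_eq_norm_sq, real_inner_self_eq_norm_sq] at h
    rw [pow_two]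
    exact h
  have hbsum : ∀ w, Summable fun m => ⟪G m, w⟫ ^ 2 := fun w =>
    Summable.of_nonneg_of_le (fun m => sq_nonneg _) (fun m => hbb w m)
      (hGnorm.summable.mul_right _)
  choose Rf hRf1 hRf2 hRf3 using fun w => orthonormal_expansion hθon (hbsum w)
  have hRfnorm : ∀ w, ‖Rf w‖ ≤ Real.sqrt A * ‖w‖ := by
    intro w
    have h1 : ‖Rf w‖ ^ 2 = ∑' m, ⟪G m, w⟫ ^ 2 := ((hRf3 w).tsum_eq).symm
    have h2 : ∑' m, ⟪G m, w⟫ ^ 2 ≤ A * ‖w‖ ^ 2 := by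
      calc ∑' m, ⟪G m, w⟫ ^ 2 ≤ ∑' m, ‖G m‖ ^ 2 * ‖w‖ ^ 2 :=
            Summable.tsum_le_tsum (fun m => hbb w m) (hbsum w) (hGnorm.summable.mul_right _)
        _ = A * ‖w‖ ^ 2 := by rw [tsum_mul_right, hGnorm.tsum_eq]
    have h3 : ‖Rf w‖ ^ 2 ≤ (Real.sqrt A * ‖w‖) ^ 2 := by
      rw [mul_pow, Real.sq_sqrt hA0, h1]
      exact h2
    have := Real.sqrt_le_sqrt h3
    rwa [Real.sqrt_sq (norm_nonneg _), Real.sqrt_sq (by positivity)] at this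
  let Rlin : Lp ℝ 2 (leb a₂ b₂) →ₗ[ℝ] Lp ℝ 2 (leb a₁ b₁) :=
    { toFun := Rf
      map_add' := fun w w' => by
        have h1 := (hRf1 w).add (hRf1 w')
        have h2 : (fun m => ⟪G m, w⟫ • θ m + ⟪G m, w'⟫ • θ m)
            = fun m => ⟪G m, w + w'⟫ • θ m := by
          funext m; rw [inner_add_right, add_smul]
        rw [h2] at h1
        exact (hRf1 (w + w')).unique h1
      map_smul' := fun r w => by
        have h1 := (hRf1 w).const_smul r
        have h2 : (fun m => r • (⟪G m, w⟫ • θ m)) = fun m => ⟪G m, r • w⟫ • θ m := by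
          funext m; rw [real_inner_smul_right, smul_smul]
        rw [h2] at h1
        simp only [RingHom.id_apply]
        exact (hRf1 (r • w)).unique h1 }
  let R : Lp ℝ 2 (leb a₂ b₂) →L[ℝ] Lp ℝ 2 (leb a₁ b₁) :=
    LinearMap.mkContinuous Rlin (Real.sqrt A) hRfnorm
  have hRapp : ∀ w, R w = Rf w := fun w => rfl
  -- the double-indexed expansion of R
  have hRsum : ∀ w, HasSum (fun mj : ℕ × ℕ => (a mj * ⟪φ mj.2, w⟫) • θ mj.1) (R w) := by
    intro w
    set W := ‖w‖ ^ 2 + 1 with hWdef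
    have hW0 : 0 < W := by positivity
    have hvsum : Summable (fun mj : ℕ × ℕ => (a mj * ⟪φ mj.2, w⟫) • θ mj.1) := by
      rw [summable_iff_vanishing_norm]
      intro ε hε
      obtain ⟨s, hs⟩ := summable_iff_vanishing_norm.1 hasum (ε ^ 2 / W) (by positivity)
      refine ⟨s, fun t ht => ?_⟩
      have key : ‖∑ p ∈ t, (a p * ⟪φ p.2, w⟫) • θ p.1‖ ^ 2 ≤ W * ∑ p ∈ t, a p ^ 2 := by
        set I := t.image Prod.fst with hIdef
        set σ : ℕ → ℝ := fun m => ∑ p ∈ t.filter (fun p => p.1 = m), (a p * ⟪φ p.2, w⟫)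
          with hσdef
        have h1 : ∑ p ∈ t, (a p * ⟪φ p.2, w⟫) • θ p.1 = ∑ m ∈ I, σ m • θ m := by
          rw [← Finset.sum_fiberwise_of_maps_to
            (fun p hp => Finset.mem_image_of_mem Prod.fst hp)
            (fun p => (a p * ⟪φ p.2, w⟫) • θ p.1)]
          refine Finset.sum_congr rfl fun m hm => ?_
          rw [hσdef, Finset.sum_smul]
          exact Finset.sum_congr rfl fun p hp => by rw [(Finset.mem_filter.1 hp).2]
        have h2 : ‖∑ m ∈ I, σ m • θ m‖ ^ 2 = ∑ m ∈ I, σ m ^ 2 := by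
          have h := hθon.orthogonalFamily.norm_sum σ I
          simpa [LinearIsometry.toSpanSingleton_apply, Real.norm_eq_abs, sq_abs] using h
        have h3 : ∀ m ∈ I, σ m ^ 2 ≤ (∑ p ∈ t.filter (fun p => p.1 = m), a p ^ 2) * W := by
          intro m hm
          have hcs := Finset.sum_mul_sq_le_sq_mul_sq (t.filter fun p => p.1 = m)
            (fun p => a p) (fun p => ⟪φ p.2, w⟫)
          have hb : ∑ p ∈ t.filter (fun p => p.1 = m), ⟪φ p.2, w⟫ ^ 2 ≤ W := by
            have hinj : ∀ p ∈ t.filter (fun p : ℕ × ℕ => p.1 = m),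
                ∀ q ∈ t.filter (fun p : ℕ × ℕ => p.1 = m), p.2 = q.2 → p = q := by
              intro p hp q hq hpq
              have hp1 := (Finset.mem_filter.1 hp).2
              have hq1 := (Finset.mem_filter.1 hq).2
              exact Prod.ext (hp1.trans hq1.symm) hpq
            have himg : ∑ j ∈ (t.filter fun p : ℕ × ℕ => p.1 = m).image Prod.snd, ⟪φ j, w⟫ ^ 2
                = ∑ p ∈ t.filter (fun p : ℕ × ℕ => p.1 = m), ⟪φ p.2, w⟫ ^ 2 :=
              Finset.sum_image hinj
            rw [← himg]
            calc ∑ j ∈ (t.filter fun p : ℕ × ℕ => p.1 = m).image Prod.snd, ⟪φ j, w⟫ ^ 2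
                ≤ ‖w‖ ^ 2 := by
                  have := hφon.sum_inner_products_le w
                    (s := (t.filter fun p : ℕ × ℕ => p.1 = m).image Prod.snd)
                  simpa [Real.norm_eq_abs, sq_abs] using this
              _ ≤ W := by rw [hWdef]; linarith
          calc σ m ^ 2 ≤ (∑ p ∈ t.filter (fun p => p.1 = m), a p ^ 2) *
                (∑ p ∈ t.filter (fun p => p.1 = m), ⟪φ p.2, w⟫ ^ 2) := hcs
            _ ≤ (∑ p ∈ t.filter (fun p => p.1 = m), a p ^ 2) * W :=
                mul_le_mul_of_nonneg_left hb (Finset.sum_nonneg fun p _ => sq_nonneg _)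
        have h4 : ∑ m ∈ I, (∑ p ∈ t.filter (fun p => p.1 = m), a p ^ 2) = ∑ p ∈ t, a p ^ 2 :=
          Finset.sum_fiberwise_of_maps_to (fun p hp => Finset.mem_image_of_mem Prod.fst hp) _
        calc ‖∑ p ∈ t, (a p * ⟪φ p.2, w⟫) • θ p.1‖ ^ 2 = ∑ m ∈ I, σ m ^ 2 := by rw [h1, h2]
          _ ≤ ∑ m ∈ I, (∑ p ∈ t.filter (fun p => p.1 = m), a p ^ 2) * W :=
              Finset.sum_le_sum h3
          _ = (∑ p ∈ t, a p ^ 2) * W := by rw [← Finset.sum_mul, h4]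
          _ = W * ∑ p ∈ t, a p ^ 2 := mul_comm _ _
      have h5 : ∑ p ∈ t, a p ^ 2 < ε ^ 2 / W := by
        have := hs t ht
        rwa [Real.norm_eq_abs,
          abs_of_nonneg (Finset.sum_nonneg fun p _ => sq_nonneg _)] at this
      have h6 : ‖∑ p ∈ t, (a p * ⟪φ p.2, w⟫) • θ p.1‖ ^ 2 < ε ^ 2 := by
        calc ‖∑ p ∈ t, (a p * ⟪φ p.2, w⟫) • θ p.1‖ ^ 2 ≤ W * ∑ p ∈ t, a p ^ 2 := key
          _ < W * (ε ^ 2 / W) := mul_lt_mul_of_pos_left h5 hW0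
          _ = ε ^ 2 := by field_simp
      exact lt_of_pow_lt_pow_left₀ 2 hε.le h6
    have hfib2 : ∀ m, HasSum (fun j => (a (m, j) * ⟪φ j, w⟫) • θ m) (⟪G m, w⟫ • θ m) := by
      intro m
      have h1 := (innerSL ℝ w).hasSum (hG1 m)
      simp only [innerSL_apply_apply, real_inner_smul_right] at h1
      have h1' : HasSum (fun j => a (m, j) * ⟪φ j, w⟫) ⟪G m, w⟫ := by
        simpa only [real_inner_comm w] using h1
      exact h1'.smul_const (θ m)
    have h8 := hvsum.hasSum.prod_fiberwise fun m => hfib2 m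
    have h9 := (hRf1 w).unique h8
    have h10 := hvsum.hasSum
    rw [← h9] at h10
    rw [hRapp w]
    exact h10
  -- conclusion
  refine ⟨hclaim1, R, fun w => hRsum w, ?_, ?_⟩
  · -- Hilbert-Schmidt property
    intro e he
    refine summable_of_sum_le (c := ∑' m, ‖G m‖ ^ 2) (fun i => sq_nonneg _) fun s => ?_
    have h1 : ∀ i, ‖R (e i)‖ ^ 2 = ∑' m, ⟪G m, e i⟫ ^ 2 := fun i => ((hRf3 (e i)).tsum_eq).symm
    have hfb : ∀ m, ∑ i ∈ s, ⟪G m, e i⟫ ^ 2 ≤ ‖G m‖ ^ 2 := by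
      intro m
      have hb := he.sum_inner_products_le (G m) (s := s)
      have heq : ∑ i ∈ s, ⟪G m, e i⟫ ^ 2 = ∑ i ∈ s, ‖⟪e i, G m⟫‖ ^ 2 :=
        Finset.sum_congr rfl fun i _ => by
          rw [real_inner_comm (G m) (e i), Real.norm_eq_abs, sq_abs]
      rw [heq]
      exact hb
    calc ∑ i ∈ s, ‖R (e i)‖ ^ 2 = ∑ i ∈ s, ∑' m, ⟪G m, e i⟫ ^ 2 :=
          Finset.sum_congr rfl fun i _ => h1 i
      _ = ∑' m, ∑ i ∈ s, ⟪G m, e i⟫ ^ 2 := (Summable.tsum_finsetSum fun i _ => hbsum (e i)).symm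
      _ ≤ ∑' m, ‖G m‖ ^ 2 := by
          refine Summable.tsum_le_tsum (fun m => hfb m) ?_ hGnorm.summable
          exact Summable.of_nonneg_of_le
            (fun m => Finset.sum_nonneg fun i _ => sq_nonneg _) (fun m => hfb m)
            hGnorm.summable
  · -- factorization
    intro w
    have heigX : ∀ m, sqXX (θ m) = Real.sqrt (lamX m) • θ m := fun m =>
      sqrt_eigen hsqXXsa hsqXXpos (hlamX m) (by rw [hsqXX]; exact hθeig m)
    have heigY : ∀ j, sqYY (φ j) = Real.sqrt (lamY j) • φ j := fun j =>
      sqrt_eigen hsqYYsa hsqYYpos (hlamY j) (by rw [hsqYY]; exact hφeig j)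
    refine ext_inner_left ℝ fun u => ?_
    have h1 := (innerSL ℝ (sqXX u)).hasSum (hRsum (sqYY w))
    simp only [innerSL_apply_apply, real_inner_smul_right] at h1
    have hterm : ∀ mj : ℕ × ℕ,
        a mj * ⟪φ mj.2, sqYY w⟫ * ⟪sqXX u, θ mj.1⟫
          = c mj * ⟪θ mj.1, u⟫ * ⟪φ mj.2, w⟫ := by
      intro mj
      have e1 : ⟪φ mj.2, sqYY w⟫ = Real.sqrt (lamY mj.2) * ⟪φ mj.2, w⟫ := by
        rw [← hsqYYsa (φ mj.2) w, heigY mj.2, real_inner_smul_left]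
      have e2 : ⟪sqXX u, θ mj.1⟫ = Real.sqrt (lamX mj.1) * ⟪θ mj.1, u⟫ := by
        rw [hsqXXsa u (θ mj.1), heigX mj.1, real_inner_smul_right,
          real_inner_comm (θ mj.1) u]
      rw [e1, e2]
      have e3 : a mj * Real.sqrt (lamY mj.2) * Real.sqrt (lamX mj.1) = c mj := by
        show c mj / Real.sqrt (lamX mj.1 * lamY mj.2) * _ * _ = c mj
        rw [Real.sqrt_mul (hlamX mj.1).le]
        have hx : Real.sqrt (lamX mj.1) ≠ 0 := Real.sqrt_ne_zero'.mpr (hlamX mj.1)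
        have hy : Real.sqrt (lamY mj.2) ≠ 0 := Real.sqrt_ne_zero'.mpr (hlamY mj.2)
        field_simp
      rw [← e3]
      ring
    simp only [hterm] at h1
    have h2 := hcore u w
    have h3 := h2.unique h1
    calc ⟪u, covOp P X Y w⟫ = ⟪FX u, FY w⟫ := (f2 u w).symm
      _ = ⟪sqXX u, R (sqYY w)⟫ := h3
      _ = ⟪u, sqXX (R (sqYY w))⟫ := hsqXXsa u _

end FLR
end
end
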